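/- arXiv:1404.1553 — 6 statements merged into one kernel-verified Lean document; each statement's English description precedes it below -/
import Mathlib

section
/- For a simple connected graph G with minimum degree at least 3, the positive support of the square of the Grover matrix satisfies (U²)⁺ = (U⁺)² + I, where U is the Grover matrix on the 2m oriented edges, U⁺ denotes the entrywise positive support (entry 1 if positive, 0 otherwise), and I is the identity matrix of size 2m. -/
open Matrix

/-- Entrywise positive support of a real matrix: entry 1 if positive, 0 otherwise. -/
noncomputable def posSupp {m : Type*} (M : Matrix m m ℝ) : Matrix m m ℝ :=
  fun i j => if 0 < M i j then 1 else 0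

/-- The Grover matrix of a graph, indexed by oriented edges (darts). -/
noncomputable def grover {V : Type*} [Fintype V] [DecidableEq V] (G : SimpleGraph V)
    [DecidableRel G.Adj] : Matrix G.Dart G.Dart ℝ := fun e f =>
  if f = e.symm then 2 / (G.degree e.toProd.1 : ℝ) - 1
  else if f.toProd.2 = e.toProd.1 then 2 / (G.degree e.toProd.1 : ℝ)
  else 0

section Aux

variable {V : Type*} [Fintype V] [DecidableEq V] (G : SimpleGraph V) [DecidableRel G.Adj]

lemma sum_eq_single_dart (e g : G.Dart) (F : G.Dart → ℝ)
    (hF : ∀ f, F f ≠ 0 → f.toProd = (g.toProd.2, e.toProd.1)) :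
    ∑ f : G.Dart, F f =
      if h : G.Adj g.toProd.2 e.toProd.1 then F ⟨(g.toProd.2, e.toProd.1), h⟩ else 0 := by
  split_ifs with h
  · refine Finset.sum_eq_single_of_mem _ (Finset.mem_univ _) (fun f _ hf => ?_)
    by_contra hne
    exact hf (SimpleGraph.Dart.ext _ _ (hF f hne))
  · refine Finset.sum_eq_zero fun f _ => ?_
    by_contra hne
    have ht := hF f hne
    have h1 : f.toProd.1 = g.toProd.2 := by rw [ht]
    have h2 : f.toProd.2 = e.toProd.1 := by rw [ht]
    exact h (h1 ▸ h2 ▸ f.adj)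

lemma grover_ne_zero_snd (e f : G.Dart) (h : grover G e f ≠ 0) :
    f.toProd.2 = e.toProd.1 := by
  unfold grover at h
  split_ifs at h with h1 h2
  · subst h1; rfl
  · exact h2
  · exact absurd rfl h

lemma grover_ne_zero_fst (f g : G.Dart) (h : grover G f g ≠ 0) :
    f.toProd.1 = g.toProd.2 := by
  unfold grover at h
  split_ifs at h with h1 h2
  · subst h1; rfl
  · exact h2.symm
  · exact absurd rfl h

lemma posSupp_ne_zero {m : Type*} (M : Matrix m m ℝ) (i j : m) (h : posSupp M i j ≠ 0) :
    M i j ≠ 0 := by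
  unfold posSupp at h
  split_ifs at h with h1
  · exact ne_of_gt h1
  · exact absurd rfl h

end Aux

/-- For a simple connected graph `G` with minimum degree at least 3,
`(U²)⁺ = (U⁺)² + I`. -/
theorem grover_sq_posSupp {V : Type*} [Fintype V] [DecidableEq V] (G : SimpleGraph V)
    [DecidableRel G.Adj] (hconn : G.Connected) (hdeg : 3 ≤ G.minDegree) :
    posSupp ((grover G) ^ 2) = (posSupp (grover G)) ^ 2 + 1 := by
  have hd : ∀ v : V, (3 : ℝ) ≤ (G.degree v : ℝ) := fun v => by
    exact_mod_cast le_trans hdeg (G.minDegree_le_degree v)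
  have hdpos : ∀ v : V, (0 : ℝ) < (G.degree v : ℝ) := fun v =>
    lt_of_lt_of_le (by norm_num) (hd v)
  have hpos : ∀ v : V, (0 : ℝ) < 2 / (G.degree v : ℝ) := fun v =>
    div_pos (by norm_num) (hdpos v)
  have hneg : ∀ v : V, 2 / (G.degree v : ℝ) - 1 < 0 := fun v => by
    have : 2 / (G.degree v : ℝ) < 1 := (div_lt_one (hdpos v)).mpr
      (lt_of_lt_of_le (by norm_num) (hd v))
    linarith
  funext e g
  have hsq : ((grover G) ^ 2) e g = ∑ f : G.Dart, grover G e f * grover G f g := by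
    rw [pow_two, Matrix.mul_apply]
  have hpsq : ((posSupp (grover G)) ^ 2) e g
      = ∑ f : G.Dart, posSupp (grover G) e f * posSupp (grover G) f g := by
    rw [pow_two, Matrix.mul_apply]
  have key1 : ∑ f : G.Dart, grover G e f * grover G f g =
      if h : G.Adj g.toProd.2 e.toProd.1 then
        grover G e ⟨(g.toProd.2, e.toProd.1), h⟩ * grover G ⟨(g.toProd.2, e.toProd.1), h⟩ g
      else 0 := by
    apply sum_eq_single_dart
    intro f hne
    have hne1 : grover G e f ≠ 0 := fun h => hne (by rw [h, zero_mul])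
    have hne2 : grover G f g ≠ 0 := fun h => hne (by rw [h, mul_zero])
    exact Prod.ext (grover_ne_zero_fst G f g hne2) (grover_ne_zero_snd G e f hne1)
  have key2 : ∑ f : G.Dart, posSupp (grover G) e f * posSupp (grover G) f g =
      if h : G.Adj g.toProd.2 e.toProd.1 then
        posSupp (grover G) e ⟨(g.toProd.2, e.toProd.1), h⟩ *
          posSupp (grover G) ⟨(g.toProd.2, e.toProd.1), h⟩ g
      else 0 := by
    apply sum_eq_single_dart
    intro f hne
    have hne1 : grover G e f ≠ 0 :=
      posSupp_ne_zero _ _ _ (fun h => hne (by rw [h, zero_mul]))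
    have hne2 : grover G f g ≠ 0 :=
      posSupp_ne_zero _ _ _ (fun h => hne (by rw [h, mul_zero]))
    exact Prod.ext (grover_ne_zero_fst G f g hne2) (grover_ne_zero_snd G e f hne1)
  rw [Matrix.add_apply, hpsq, key2, Matrix.one_apply]
  simp only [posSupp]
  rw [hsq, key1]
  by_cases hadj : G.Adj g.toProd.2 e.toProd.1
  · rw [dif_pos hadj, dif_pos hadj]
    set f₀ : G.Dart := ⟨(g.toProd.2, e.toProd.1), hadj⟩ with hf₀
    have hf₀p : f₀.toProd = (g.toProd.2, e.toProd.1) := rfl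
    by_cases h2 : g.toProd.2 = e.toProd.2
    · -- f₀ = e.symm
      have hfe : f₀ = e.symm := SimpleGraph.Dart.ext _ _ (by
        rw [hf₀p, h2]; rfl)
      have hA : grover G e f₀ = 2 / (G.degree e.toProd.1 : ℝ) - 1 := by
        unfold grover; rw [if_pos hfe]
      by_cases h1 : g.toProd.1 = e.toProd.1
      · have heg : e = g := SimpleGraph.Dart.ext _ _ (Prod.ext h1.symm h2.symm)
        have hgf : g = f₀.symm := SimpleGraph.Dart.ext _ _ (by
          show g.toProd = (e.toProd.1, g.toProd.2)
          exact Prod.ext h1 rfl)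
        have hB : grover G f₀ g = 2 / (G.degree f₀.toProd.1 : ℝ) - 1 := by
          unfold grover; rw [if_pos hgf]
        rw [hA, hB]
        have hprod : 0 < (2 / (G.degree e.toProd.1 : ℝ) - 1) *
            (2 / (G.degree f₀.toProd.1 : ℝ) - 1) :=
          mul_pos_of_neg_of_neg (hneg _) (hneg _)
        rw [if_pos hprod, if_neg (not_lt.mpr (le_of_lt (hneg _))), if_pos heg]
        ring
      · -- g.2 = e.2 but g.1 ≠ e.1 : product negative
        have hgf : g ≠ f₀.symm := fun h => by
          apply h1
          have : g.toProd = (e.toProd.1, g.toProd.2) := by rw [h]; rfl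
          rw [this]
        have hB : grover G f₀ g = 2 / (G.degree f₀.toProd.1 : ℝ) := by
          unfold grover; rw [if_neg hgf, if_pos rfl]
        have heg : e ≠ g := fun h => h1 (by rw [h])
        rw [hA, hB]
        have hprod : (2 / (G.degree e.toProd.1 : ℝ) - 1) *
            (2 / (G.degree f₀.toProd.1 : ℝ)) < 0 :=
          mul_neg_of_neg_of_pos (hneg _) (hpos _)
        rw [if_neg (not_lt.mpr (le_of_lt hprod)),
          if_neg (not_lt.mpr (le_of_lt (hneg _))), if_neg heg]
        ring
    · have hfe : f₀ ≠ e.symm := fun h => by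
        apply h2
        have : f₀.toProd = (e.toProd.2, e.toProd.1) := by rw [h]; rfl
        rw [hf₀p] at this
        exact congrArg Prod.fst this
      have hA : grover G e f₀ = 2 / (G.degree e.toProd.1 : ℝ) := by
        unfold grover; rw [if_neg hfe, if_pos rfl]
      have heg : e ≠ g := fun h => h2 (by rw [h])
      by_cases h1 : g.toProd.1 = e.toProd.1
      · have hgf : g = f₀.symm := SimpleGraph.Dart.ext _ _ (by
          show g.toProd = (e.toProd.1, g.toProd.2)
          exact Prod.ext h1 rfl)
        have hB : grover G f₀ g = 2 / (G.degree f₀.toProd.1 : ℝ) - 1 := by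
          unfold grover; rw [if_pos hgf]
        rw [hA, hB]
        have hprod : (2 / (G.degree e.toProd.1 : ℝ)) *
            (2 / (G.degree f₀.toProd.1 : ℝ) - 1) < 0 :=
          mul_neg_of_pos_of_neg (hpos _) (hneg _)
        rw [if_neg (not_lt.mpr (le_of_lt hprod)),
          if_neg (not_lt.mpr (le_of_lt (hneg _))), if_neg heg]
        ring
      · have hgf : g ≠ f₀.symm := fun h => by
          apply h1
          have : g.toProd = (e.toProd.1, g.toProd.2) := by rw [h]; rfl
          rw [this]
        have hB : grover G f₀ g = 2 / (G.degree f₀.toProd.1 : ℝ) := by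
          unfold grover; rw [if_neg hgf, if_pos rfl]
        rw [hA, hB]
        have hprod : 0 < (2 / (G.degree e.toProd.1 : ℝ)) *
            (2 / (G.degree f₀.toProd.1 : ℝ)) :=
          mul_pos (hpos _) (hpos _)
        rw [if_pos hprod, if_pos (hpos _), if_pos (hpos _), if_neg heg]
        ring
  · rw [dif_neg hadj, dif_neg hadj]
    have heg : e ≠ g := fun h => hadj (by rw [← h]; exact e.adj.symm)
    rw [if_neg (lt_irrefl 0), if_neg heg]
    ring
end

section
/- For a finite simple connected graph G, the entry of the transpose of (U²)⁺ at position (e,f) equals 1 if and only if (e,f) is a 2-step-arc or a 2-step-identity, where a 2-step-arc (e,f) means there exists an oriented edge g with g ≠ e⁻¹, g ≠ f⁻¹, o(g) = t(e), and t(g) = o(f), and a 2-step-identity means e = f. -/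
open Matrix

/-- `(e,f)` is a 2-step-arc: there is an oriented edge `g` with `g ≠ e⁻¹`, `g ≠ f⁻¹`,
`o(g) = t(e)` and `t(g) = o(f)`. -/
def IsTwoStepArc {V : Type*} (G : SimpleGraph V) (e f : G.Dart) : Prop :=
  ∃ g : G.Dart, g ≠ e.symm ∧ g ≠ f.symm ∧ g.toProd.1 = e.toProd.2 ∧ g.toProd.2 = f.toProd.1

section Aux

variable {V : Type*} [Fintype V] [DecidableEq V] (G : SimpleGraph V) [DecidableRel G.Adj]

lemma grover_nonneg_of_ne (e f : G.Dart) (h : f ≠ e.symm) : 0 ≤ grover G e f := by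
  unfold grover
  rw [if_neg h]
  split_ifs with h2
  · have : (0:ℝ) ≤ (G.degree e.toProd.1 : ℝ) := Nat.cast_nonneg _
    positivity
  · exact le_refl 0

lemma grover_mul_eq_zero (e f g : G.Dart) (h1 : g ≠ f.symm) (h2 : g ≠ e.symm)
    (h3 : ¬ (g.toProd.1 = e.toProd.2 ∧ g.toProd.2 = f.toProd.1)) :
    grover G f g * grover G g e = 0 := by
  unfold grover
  rw [if_neg h1]
  have h2' : e ≠ g.symm := fun h => h2 (by rw [h, SimpleGraph.Dart.symm_symm])
  rw [if_neg h2']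
  by_cases ha : g.toProd.2 = f.toProd.1
  · rw [if_pos ha]
    have hb : ¬ e.toProd.2 = g.toProd.1 := fun hb => h3 ⟨hb.symm, ha⟩
    rw [if_neg hb, mul_zero]
  · rw [if_neg ha, zero_mul]

end Aux

/-- the `(e,f)` entry of the transpose of `(U²)⁺` equals 1 iff `(e,f)` is a
2-step-arc or a 2-step-identity. -/
theorem transpose_posSupp_grover_sq_entry {V : Type*} [Fintype V] [DecidableEq V]
    (G : SimpleGraph V) [DecidableRel G.Adj] (hconn : G.Connected) (hdeg : 3 ≤ G.minDegree)
    (e f : G.Dart) :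
    (posSupp ((grover G) ^ 2))ᵀ e f = 1 ↔ IsTwoStepArc G e f ∨ e = f := by
  classical
  have hdeg' : ∀ v : V, (3:ℝ) ≤ (G.degree v : ℝ) := fun v => by
    exact_mod_cast le_trans hdeg (G.minDegree_le_degree v)
  have hdpos : ∀ v : V, (0:ℝ) < (G.degree v : ℝ) := fun v =>
    lt_of_lt_of_le (by norm_num) (hdeg' v)
  have hneg : ∀ v : V, 2 / (G.degree v : ℝ) - 1 < 0 := fun v => by
    have h1 := hdpos v
    have h2 := hdeg' v
    rw [sub_neg, div_lt_one h1]; linarith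
  have hpos2 : ∀ v : V, (0:ℝ) < 2 / (G.degree v : ℝ) := fun v =>
    div_pos two_pos (hdpos v)
  have hentry : ((grover G) ^ 2) f e = ∑ g : G.Dart, grover G f g * grover G g e := by
    rw [pow_two, Matrix.mul_apply]
  have hite : ∀ x : ℝ, ((if 0 < x then (1:ℝ) else 0) = 1 ↔ 0 < x) := by
    intro x; split_ifs with h <;> simp [h]
  rw [Matrix.transpose_apply]
  show (if 0 < ((grover G) ^ 2) f e then (1:ℝ) else 0) = 1 ↔ _
  rw [hite, hentry]
  by_cases hef : e = f
  · subst hef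
    rw [iff_true_intro (Or.inr rfl), iff_true]
    have hsum : ∑ g : G.Dart, grover G e g * grover G g e
        = grover G e e.symm * grover G e.symm e := by
      apply Finset.sum_eq_single
      · intro g _ hg
        apply grover_mul_eq_zero G e e g hg hg
        rintro ⟨ha, hb⟩
        exact hg (SimpleGraph.Dart.ext _ _ (Prod.ext ha hb))
      · intro h; exact absurd (Finset.mem_univ _) h
    rw [hsum]
    have h1 : grover G e e.symm = 2 / (G.degree e.toProd.1 : ℝ) - 1 := by
      unfold grover; rw [if_pos rfl]
    have h2 : grover G e.symm e = 2 / (G.degree e.toProd.2 : ℝ) - 1 := by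
      unfold grover
      rw [if_pos (SimpleGraph.Dart.symm_symm e).symm]
      simp
      rfl
    rw [h1, h2]
    exact mul_pos_of_neg_of_neg (hneg _) (hneg _)
  · by_cases harc : IsTwoStepArc G e f
    · rw [iff_true_intro (Or.inl harc), iff_true]
      obtain ⟨g₀, hg0e, hg0f, ho, ht⟩ := harc
      have hsum : ∑ g : G.Dart, grover G f g * grover G g e
          = grover G f g₀ * grover G g₀ e := by
        apply Finset.sum_eq_single
        · intro g _ hg
          by_cases hgf : g = f.symm
          · subst hgf
            have hz : grover G f.symm e = 0 := by
              unfold grover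
              have he1 : e ≠ f.symm.symm := by
                rw [SimpleGraph.Dart.symm_symm]; exact hef
              rw [if_neg he1]
              have he2 : ¬ e.toProd.2 = f.symm.toProd.1 := by
                intro h
                apply hg
                exact SimpleGraph.Dart.ext _ _ (Prod.ext ((ho.trans h).symm) ht.symm)
              rw [if_neg he2]
            rw [hz, mul_zero]
          · by_cases hge : g = e.symm
            · subst hge
              have hz : grover G f e.symm = 0 := by
                unfold grover
                have he1 : e.symm ≠ f.symm := fun h =>
                  hef (by rw [← SimpleGraph.Dart.symm_symm e, h, SimpleGraph.Dart.symm_symm])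
                rw [if_neg he1]
                have he2 : ¬ e.symm.toProd.2 = f.toProd.1 := by
                  intro h
                  apply hg
                  exact SimpleGraph.Dart.ext _ _ (Prod.ext ho.symm (ht.trans h.symm).symm)
                rw [if_neg he2]
              rw [hz, zero_mul]
            · apply grover_mul_eq_zero G e f g hgf hge
              rintro ⟨ha, hb⟩
              exact hg (SimpleGraph.Dart.ext _ _
                (Prod.ext (ha.trans ho.symm) (hb.trans ht.symm)))
        · intro h; exact absurd (Finset.mem_univ _) h
      rw [hsum]
      have h1 : grover G f g₀ = 2 / (G.degree f.toProd.1 : ℝ) := by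
        unfold grover; rw [if_neg hg0f, if_pos ht]
      have h2 : grover G g₀ e = 2 / (G.degree g₀.toProd.1 : ℝ) := by
        unfold grover
        have he1 : e ≠ g₀.symm := fun h => hg0e (by rw [h, SimpleGraph.Dart.symm_symm])
        rw [if_neg he1, if_pos ho.symm]
      rw [h1, h2]
      exact mul_pos (hpos2 _) (hpos2 _)
    · have hrhs : ¬ (IsTwoStepArc G e f ∨ e = f) := fun h => h.elim harc hef
      rw [iff_false_intro hrhs, iff_false, not_lt]
      apply Finset.sum_nonpos
      intro g _
      by_cases hgf : g = f.symm
      · subst hgf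
        have h1 : grover G f f.symm = 2 / (G.degree f.toProd.1 : ℝ) - 1 := by
          unfold grover; rw [if_pos rfl]
        have h2 : 0 ≤ grover G f.symm e :=
          grover_nonneg_of_ne G f.symm e (by rw [SimpleGraph.Dart.symm_symm]; exact hef)
        rw [h1]
        exact mul_nonpos_of_nonpos_of_nonneg (hneg _).le h2
      · by_cases hge : g = e.symm
        · subst hge
          have h1 : 0 ≤ grover G f e.symm :=
            grover_nonneg_of_ne G f e.symm (fun h =>
              hef (by rw [← SimpleGraph.Dart.symm_symm e, h, SimpleGraph.Dart.symm_symm]))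
          have h2 : grover G e.symm e = 2 / (G.degree e.symm.toProd.1 : ℝ) - 1 := by
            unfold grover
            rw [if_pos (SimpleGraph.Dart.symm_symm e).symm]
          rw [h2]
          exact mul_nonpos_of_nonneg_of_nonpos h1 (hneg _).le
        · rw [grover_mul_eq_zero G e f g hgf hge
            (fun hcoord => harc ⟨g, hge, hgf, hcoord.1, hcoord.2⟩)]
end

section
/- Let G be a simple connected k-regular graph with k ≥ 3 and adjacency matrix A. If λ is an eigenvalue of A, then the complex numbers μ = (λ² − 2k + 4)/2 ± i·λ·√(k − 1 − λ²/4) are eigenvalues of the positive support (U²)⁺ of the square of the Grover matrix. Moreover, the remaining 2(m − n) eigenvalues of (U²)⁺ all equal 2. -/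
open Matrix Polynomial

/-- The eigenvalue `μ = (λ² − 2k + 4)/2 ± i λ √(k − 1 − λ²/4)` (sign `s`),
square roots of negative reals being interpreted in `ℂ`. -/
noncomputable def muEig (k : ℕ) (lam : ℂ) (s : ℝ) : ℂ :=
  (lam ^ 2 - 2 * k + 4) / 2 + s * Complex.I * lam * ((k : ℂ) - 1 - lam ^ 2 / 4) ^ ((1 : ℂ) / 2)

set_option linter.unusedSectionVars false
set_option maxHeartbeats 1600000

namespace GroverAux

open SimpleGraph

variable {V : Type*} [Fintype V] [DecidableEq V] (G : SimpleGraph V) [DecidableRel G.Adj]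


noncomputable def nbR : Matrix G.Dart G.Dart ℝ :=
  fun e f => if f.toProd.2 = e.toProd.1 ∧ f ≠ e.symm then 1 else 0

lemma dart_sum {M : Type*} [AddCommMonoid M] (a b : V) (c : G.Dart → M) :
    (∑ e : G.Dart, if e.toProd = (a, b) then c e else 0) =
      if h : G.Adj a b then c ⟨(a, b), h⟩ else 0 := by
  by_cases h : G.Adj a b
  · rw [dif_pos h, Finset.sum_eq_single (⟨(a, b), h⟩ : G.Dart)]
    · rw [if_pos rfl]
    · intro g _ hg
      rw [if_neg fun hgp => hg (SimpleGraph.Dart.ext _ _ hgp)]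
    · intro h'; exact absurd (Finset.mem_univ _) h'
  · rw [dif_neg h]
    refine Finset.sum_eq_zero fun g _ => ?_
    rw [if_neg]
    intro hgp
    have := g.adj
    rw [hgp] at this
    exact h this

lemma grover_sq_apply {k : ℕ} (hreg : G.IsRegularOfDegree k) (e f : G.Dart) :
    (grover G ^ 2) e f =
      if G.Adj f.toProd.2 e.toProd.1 then
        (if f.toProd.2 = e.toProd.2 then 2 / (k : ℝ) - 1 else 2 / (k : ℝ)) *
          (if f.toProd.1 = e.toProd.1 then 2 / (k : ℝ) - 1 else 2 / (k : ℝ))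
      else 0 := by
  have hterm : ∀ g : G.Dart, grover G e g * grover G g f =
      if g.toProd = (f.toProd.2, e.toProd.1) then
        (if f.toProd.2 = e.toProd.2 then 2 / (k : ℝ) - 1 else 2 / (k : ℝ)) *
          (if f.toProd.1 = e.toProd.1 then 2 / (k : ℝ) - 1 else 2 / (k : ℝ))
      else 0 := by
    intro g
    by_cases hg : g.toProd = (f.toProd.2, e.toProd.1)
    · have h1 : g.toProd.1 = f.toProd.2 := by rw [hg]
      have h2 : g.toProd.2 = e.toProd.1 := by rw [hg]
      rw [if_pos hg]
      have hd1 : grover G e g =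
          (if f.toProd.2 = e.toProd.2 then 2 / (k : ℝ) - 1 else 2 / (k : ℝ)) := by
        unfold grover
        rw [hreg e.toProd.1]
        have hsymm : g = e.symm ↔ f.toProd.2 = e.toProd.2 := by
          rw [SimpleGraph.Dart.ext_iff, hg]
          constructor
          · intro hp
            have := congrArg Prod.fst hp
            simpa using this
          · intro hp
            have : e.symm.toProd = (e.toProd.2, e.toProd.1) := rfl
            rw [this, hp]
        by_cases hc : f.toProd.2 = e.toProd.2
        · rw [if_pos (hsymm.mpr hc), if_pos hc]
        · rw [if_neg (fun hh => hc (hsymm.mp hh)), if_pos h2, if_neg hc]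
      have hd2 : grover G g f =
          (if f.toProd.1 = e.toProd.1 then 2 / (k : ℝ) - 1 else 2 / (k : ℝ)) := by
        unfold grover
        rw [hreg g.toProd.1]
        have hsymm : f = g.symm ↔ f.toProd.1 = e.toProd.1 := by
          rw [SimpleGraph.Dart.ext_iff]
          have : g.symm.toProd = (g.toProd.2, g.toProd.1) := rfl
          rw [this, h1, h2, Prod.ext_iff]
          constructor
          · intro hp; exact hp.1
          · intro hp; exact ⟨hp, rfl⟩
        by_cases hc : f.toProd.1 = e.toProd.1
        · rw [if_pos (hsymm.mpr hc), if_pos hc]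
        · rw [if_neg (fun hh => hc (hsymm.mp hh)), if_pos h1.symm, if_neg hc]
      rw [hd1, hd2]
    · rw [if_neg hg]
      have : grover G e g = 0 ∨ grover G g f = 0 := by
        by_contra hcon
        push_neg at hcon
        obtain ⟨hn1, hn2⟩ := hcon
        apply hg
        have hg2 : g.toProd.2 = e.toProd.1 := by
          unfold grover at hn1
          split_ifs at hn1 with ha hb
          · rw [ha]; rfl
          · exact hb
          · exact absurd rfl hn1
        have hg1 : g.toProd.1 = f.toProd.2 := by
          unfold grover at hn2
          split_ifs at hn2 with ha hb
          · rw [ha]; rfl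
          · exact hb.symm
          · exact absurd rfl hn2
        exact Prod.ext hg1 hg2
      rcases this with h | h <;> rw [h] <;> ring
  rw [pow_two, Matrix.mul_apply]
  simp_rw [hterm]
  rw [dart_sum]
  by_cases h : G.Adj f.toProd.2 e.toProd.1
  · rw [dif_pos h, if_pos h]
  · rw [dif_neg h, if_neg h]

lemma nbR_sq_apply (e f : G.Dart) :
    (nbR G * nbR G) e f =
      if G.Adj f.toProd.2 e.toProd.1 ∧ f.toProd.2 ≠ e.toProd.2 ∧ f.toProd.1 ≠ e.toProd.1
      then 1 else 0 := by
  have hterm : ∀ g : G.Dart, nbR G e g * nbR G g f =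
      if g.toProd = (f.toProd.2, e.toProd.1) then
        (if f.toProd.2 ≠ e.toProd.2 ∧ f.toProd.1 ≠ e.toProd.1 then (1:ℝ) else 0)
      else 0 := by
    intro g
    by_cases hg : g.toProd = (f.toProd.2, e.toProd.1)
    · have h1 : g.toProd.1 = f.toProd.2 := by rw [hg]
      have h2 : g.toProd.2 = e.toProd.1 := by rw [hg]
      rw [if_pos hg]
      have hsymm : g = e.symm ↔ f.toProd.2 = e.toProd.2 := by
        rw [SimpleGraph.Dart.ext_iff, hg]
        constructor
        · intro hp
          have := congrArg Prod.fst hp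
          simpa using this
        · intro hp
          have : e.symm.toProd = (e.toProd.2, e.toProd.1) := rfl
          rw [this, hp]
      have hsymm2 : f = g.symm ↔ f.toProd.1 = e.toProd.1 := by
        rw [SimpleGraph.Dart.ext_iff]
        have : g.symm.toProd = (g.toProd.2, g.toProd.1) := rfl
        rw [this, h1, h2, Prod.ext_iff]
        constructor
        · intro hp; exact hp.1
        · intro hp; exact ⟨hp, rfl⟩
      unfold nbR
      by_cases hc2 : f.toProd.2 = e.toProd.2
      · have hP : ¬(g.toProd.2 = e.toProd.1 ∧ g ≠ e.symm) := fun hcon => hcon.2 (hsymm.mpr hc2)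
        rw [if_neg hP, zero_mul, if_neg (fun hcon => hcon.1 hc2)]
      · by_cases hc1 : f.toProd.1 = e.toProd.1
        · have hQ : ¬(f.toProd.2 = g.toProd.1 ∧ f ≠ g.symm) := fun hcon => hcon.2 (hsymm2.mpr hc1)
          rw [if_neg hQ, mul_zero, if_neg (fun hcon => hcon.2 hc1)]
        · rw [if_pos ⟨h2, fun hh => hc2 (hsymm.mp hh)⟩,
            if_pos ⟨h1.symm, fun hh => hc1 (hsymm2.mp hh)⟩, if_pos ⟨hc2, hc1⟩, one_mul]
    · rw [if_neg hg]
      have : nbR G e g = 0 ∨ nbR G g f = 0 := by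
        by_contra hcon
        push_neg at hcon
        obtain ⟨hn1, hn2⟩ := hcon
        apply hg
        unfold nbR at hn1 hn2
        split_ifs at hn1 with ha
        · split_ifs at hn2 with hb
          · exact Prod.ext hb.1.symm ha.1
          · exact absurd rfl hn2
        · exact absurd rfl hn1
      rcases this with h | h <;> rw [h] <;> ring
  rw [Matrix.mul_apply]
  simp_rw [hterm]
  rw [dart_sum]
  by_cases h : G.Adj f.toProd.2 e.toProd.1
  · rw [dif_pos h]
    by_cases h2 : f.toProd.2 ≠ e.toProd.2 ∧ f.toProd.1 ≠ e.toProd.1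
    · rw [if_pos h2, if_pos ⟨h, h2⟩]
    · rw [if_neg h2, if_neg (fun hc => h2 ⟨hc.2.1, hc.2.2⟩)]
  · rw [dif_neg h, if_neg (fun hc => h hc.1)]

lemma posSupp_eq {k : ℕ} (hk : 3 ≤ k) (hreg : G.IsRegularOfDegree k) :
    posSupp (grover G ^ 2) = nbR G * nbR G + 1 := by
  have hk0 : (0 : ℝ) < k := by positivity
  have ht0 : 0 < 2 / (k : ℝ) := by positivity
  have ht1 : 2 / (k : ℝ) - 1 < 0 := by
    rw [sub_neg, div_lt_one hk0]
    exact_mod_cast by omega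
  funext e f
  show (if 0 < (grover G ^ 2) e f then (1:ℝ) else 0) = _
  rw [grover_sq_apply G hreg, Matrix.add_apply, nbR_sq_apply, Matrix.one_apply]
  by_cases hA : G.Adj f.toProd.2 e.toProd.1
  · rw [if_pos hA]
    by_cases h2 : f.toProd.2 = e.toProd.2 <;> by_cases h1 : f.toProd.1 = e.toProd.1
    · have hef : e = f := (SimpleGraph.Dart.ext f e (Prod.ext h1 h2)).symm
      rw [if_pos h2, if_pos h1, if_pos (mul_pos_of_neg_of_neg ht1 ht1),
        if_neg (fun hc => hc.2.1 h2), if_pos hef, zero_add]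
    · rw [if_pos h2, if_neg h1, if_neg (by nlinarith), if_neg (fun hc => hc.2.1 h2),
        if_neg (fun hef => h1 (by rw [hef])), add_zero]
    · rw [if_neg h2, if_pos h1, if_neg (by nlinarith), if_neg (fun hc => hc.2.2 h1),
        if_neg (fun hef => h2 (by rw [hef])), add_zero]
    · rw [if_neg h2, if_neg h1, if_pos (by positivity), if_pos ⟨hA, h2, h1⟩,
        if_neg (fun hef => h2 (by rw [hef])), add_zero]
  · rw [if_neg hA, if_neg (lt_irrefl 0), if_neg (fun hc => hA hc.1), if_neg, add_zero]
    intro hef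
    exact hA (by rw [← hef]; exact e.adj.symm)



noncomputable def nbC : Matrix G.Dart G.Dart ℂ :=
  fun e f => if f.toProd.2 = e.toProd.1 ∧ f ≠ e.symm then 1 else 0

noncomputable def KM : Matrix G.Dart V ℂ := fun e v => if e.toProd.1 = v then 1 else 0
noncomputable def LM : Matrix G.Dart V ℂ := fun e v => if e.toProd.2 = v then 1 else 0
noncomputable def JM : Matrix G.Dart G.Dart ℂ := fun e f => if f = e.symm then 1 else 0

lemma nbR_map : (nbR G).map (Complex.ofReal ·) = nbC G := by
  funext e f
  simp [nbR, nbC, Matrix.map_apply, apply_ite (Complex.ofReal ·)]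

lemma JM_mul_JM : JM G * JM G = 1 := by
  funext e f
  rw [Matrix.mul_apply, Matrix.one_apply]
  rw [Finset.sum_eq_single e.symm]
  · show (if e.symm = e.symm then (1:ℂ) else 0) * (if f = e.symm.symm then 1 else 0) = _
    rw [if_pos rfl, one_mul, e.symm_symm]
    by_cases h : e = f
    · rw [if_pos h.symm, if_pos h]
    · rw [if_neg (fun hc => h hc.symm), if_neg h]
  · intro g _ hg
    show (if g = e.symm then (1:ℂ) else 0) * _ = 0
    rw [if_neg hg, zero_mul]
  · intro h'; exact absurd (Finset.mem_univ _) h'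

lemma JM_mul_KM : JM G * KM G = LM G := by
  funext e v
  rw [Matrix.mul_apply]
  rw [Finset.sum_eq_single e.symm]
  · show (if e.symm = e.symm then (1:ℂ) else 0) * (if e.symm.toProd.1 = v then 1 else 0) = _
    rw [if_pos rfl, one_mul]
    rfl
  · intro g _ hg
    show (if g = e.symm then (1:ℂ) else 0) * _ = 0
    rw [if_neg hg, zero_mul]
  · intro h'; exact absurd (Finset.mem_univ _) h'

lemma nbC_eq : nbC G = KM G * (LM G)ᵀ - JM G := by
  funext e f
  rw [Matrix.sub_apply, Matrix.mul_apply]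
  have hsum : (∑ v, KM G e v * (LM G)ᵀ v f) = if f.toProd.2 = e.toProd.1 then (1:ℂ) else 0 := by
    rw [Finset.sum_eq_single e.toProd.1]
    · show (if e.toProd.1 = e.toProd.1 then (1:ℂ) else 0) *
        (if f.toProd.2 = e.toProd.1 then 1 else 0) = _
      rw [if_pos rfl, one_mul]
    · intro v _ hv
      show (if e.toProd.1 = v then (1:ℂ) else 0) * _ = 0
      rw [if_neg (fun hc => hv hc.symm), zero_mul]
    · intro h'; exact absurd (Finset.mem_univ _) h'
  rw [hsum]
  show nbC G e f = (if f.toProd.2 = e.toProd.1 then (1:ℂ) else 0) - JM G e f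
  rw [nbC, JM]
  by_cases h2 : f.toProd.2 = e.toProd.1
  · by_cases hs : f = e.symm
    · rw [if_neg (fun hc => hc.2 hs), if_pos h2, if_pos hs, sub_self]
    · rw [if_pos ⟨h2, hs⟩, if_pos h2, if_neg hs, sub_zero]
  · have hs : f ≠ e.symm := by
      intro hc; subst hc; exact h2 rfl
    rw [if_neg (fun hc => h2 hc.1), if_neg h2, if_neg hs, sub_zero]

lemma LMT_mul_KM : (LM G)ᵀ * KM G = G.adjMatrix ℂ := by
  funext v w
  rw [Matrix.mul_apply]
  have : ∀ e : G.Dart, (LM G)ᵀ v e * KM G e w =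
      if e.toProd = (w, v) then (1:ℂ) else 0 := by
    intro e
    rw [transpose_apply, LM, KM]
    by_cases h : e.toProd = (w, v)
    · have h1 : e.toProd.1 = w := by rw [h]
      have h2 : e.toProd.2 = v := by rw [h]
      rw [if_pos h2, if_pos h1, if_pos h, one_mul]
    · rw [if_neg h]
      by_cases h2 : e.toProd.2 = v
      · rw [if_pos h2, one_mul, if_neg]
        intro h1
        exact h (Prod.ext h1 h2)
      · rw [if_neg h2, zero_mul]
  simp_rw [this]
  rw [dart_sum, SimpleGraph.adjMatrix_apply]
  by_cases h : G.Adj w v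
  · rw [dif_pos h, if_pos (G.adj_symm h)]
  · rw [dif_neg h, if_neg (fun hc => h (G.adj_symm hc))]

lemma card_darts_snd (v : V) :
    (∑ e : G.Dart, if e.toProd.2 = v then (1 : ℂ) else 0) = (G.degree v : ℂ) := by
  have hstep : ∀ e : G.Dart, (if e.toProd.2 = v then (1:ℂ) else 0) =
      ∑ w : V, if e.toProd = (w, v) then 1 else 0 := by
    intro e
    by_cases h : e.toProd.2 = v
    · rw [if_pos h, Finset.sum_eq_single e.toProd.1]
      · rw [if_pos (show e.toProd = (e.toProd.1, v) from Prod.ext_iff.mpr ⟨rfl, h⟩)]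
      · intro w _ hw
        rw [if_neg]
        intro hc
        exact hw (by rw [hc])
      · intro h'; exact absurd (Finset.mem_univ _) h'
    · rw [if_neg h]
      refine (Finset.sum_eq_zero fun w _ => ?_).symm
      rw [if_neg (fun hc => h (by rw [hc]))]
  simp_rw [hstep]
  rw [Finset.sum_comm]
  simp_rw [dart_sum G _ v (fun _ => (1:ℂ))]
  rw [SimpleGraph.degree, SimpleGraph.neighborFinset_eq_filter]
  rw [Finset.card_filter]
  push_cast
  refine Finset.sum_congr rfl fun w _ => ?_
  by_cases h : G.Adj w v
  · rw [dif_pos h, if_pos (G.adj_symm h)]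
  · rw [dif_neg h, if_neg (fun hc => h (G.adj_symm hc))]

lemma LMT_mul_LM {k : ℕ} (hreg : G.IsRegularOfDegree k) :
    (LM G)ᵀ * LM G = (k : ℂ) • 1 := by
  funext v w
  rw [Matrix.mul_apply, Matrix.smul_apply, Matrix.one_apply]
  by_cases h : v = w
  · subst h
    rw [if_pos rfl, smul_eq_mul, mul_one]
    have hterm : ∀ e : G.Dart, (LM G)ᵀ v e * LM G e v =
        if e.toProd.2 = v then (1:ℂ) else 0 := by
      intro e
      rw [transpose_apply]
      show (if e.toProd.2 = v then (1:ℂ) else 0) * (if e.toProd.2 = v then 1 else 0) = _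
      by_cases h1 : e.toProd.2 = v
      · rw [if_pos h1, one_mul]
      · rw [if_neg h1, zero_mul]
    simp_rw [hterm]
    rw [card_darts_snd, hreg v]
  · rw [if_neg h, smul_zero]
    refine Finset.sum_eq_zero fun e _ => ?_
    show (if e.toProd.2 = v then (1:ℂ) else 0) * (if e.toProd.2 = w then 1 else 0) = 0
    by_cases h1 : e.toProd.2 = v
    · rw [if_pos h1, one_mul, if_neg (fun hc => h (h1.symm.trans hc))]
    · rw [if_neg h1, zero_mul]


lemma eval_charpoly {ι R : Type*} [Fintype ι] [DecidableEq ι] [CommRing R]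
    (M : Matrix ι ι R) (x : R) :
    (M.charpoly).eval x = det (x • (1 : Matrix ι ι R) - M) := by
  rw [Matrix.charpoly, ← Polynomial.coe_evalRingHom, RingHom.map_det]
  congr 1
  funext i j
  by_cases h : i = j
  · subst h
    simp [Matrix.charmatrix_apply_eq, Matrix.map_apply, Matrix.sub_apply, Matrix.smul_apply,
      Matrix.one_apply_eq]
  · simp [Matrix.charmatrix_apply_ne _ _ _ h, Matrix.map_apply, Matrix.sub_apply,
      Matrix.smul_apply, Matrix.one_apply_ne h, h]

lemma mem_spectrum_iff_det {ι R : Type*} [Field R] [Fintype ι] [DecidableEq ι]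
    (M : Matrix ι ι R) (μ : R) :
    μ ∈ spectrum R M ↔ det (μ • (1 : Matrix ι ι R) - M) = 0 := by
  rw [spectrum.mem_iff, Matrix.isUnit_iff_isUnit_det, Algebra.algebraMap_eq_smul_one]
  simp [isUnit_iff_ne_zero]

lemma sq_cpow_half (z : ℂ) : (z ^ ((1 : ℂ) / 2)) ^ 2 = z := by
  by_cases hz : z = 0
  · rw [hz, Complex.zero_cpow (by norm_num), zero_pow two_ne_zero]
  · rw [sq, ← Complex.cpow_add _ _ hz]
    norm_num

lemma key_fact (s : ℂ) (hs : (1 : ℂ) - s ^ 2 ≠ 0) :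
    s • (1 : Matrix G.Dart G.Dart ℂ) - nbC G =
      (s • 1 + JM G) *
        (1 - ((1 - s ^ 2)⁻¹ • ((JM G - s • 1) * (KM G * (LM G)ᵀ)))) := by
  have h2 : (s • 1 + JM G) * (JM G - s • (1 : Matrix G.Dart G.Dart ℂ)) = (1 - s ^ 2) • 1 := by
    simp only [Matrix.add_mul, Matrix.mul_sub, Matrix.sub_mul, Matrix.mul_add,
      Matrix.smul_mul, Matrix.mul_smul, Matrix.one_mul, Matrix.mul_one, JM_mul_JM G,
      smul_smul]
    module
  rw [Matrix.mul_sub, Matrix.mul_one, Matrix.mul_smul, ← Matrix.mul_assoc, h2,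
    Matrix.smul_mul, smul_smul, inv_mul_cancel₀ hs, one_smul, one_mul, nbC_eq G]
  abel

lemma det_point {k : ℕ} (hreg : G.IsRegularOfDegree k) (s : ℂ)
    (hs : (1 : ℂ) - s ^ 2 ≠ 0) :
    det (s • (1 : Matrix G.Dart G.Dart ℂ) - nbC G) =
      det (s • 1 + JM G) *
        (((1 - s ^ 2)⁻¹) ^ (Fintype.card V) *
          det ((1 - s ^ 2 - (k : ℂ)) • (1 : Matrix V V ℂ) + s • G.adjMatrix ℂ)) := by
  rw [key_fact G s hs, det_mul]
  congr 1
  have h1 : (1 : Matrix G.Dart G.Dart ℂ) -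
      (1 - s ^ 2)⁻¹ • ((JM G - s • 1) * (KM G * (LM G)ᵀ)) =
      1 - (((1 - s ^ 2)⁻¹ • ((JM G - s • 1) * KM G)) * (LM G)ᵀ) := by
    rw [Matrix.smul_mul, Matrix.mul_assoc]
  rw [h1, Matrix.det_one_sub_mul_comm]
  have h3 : (LM G)ᵀ * ((1 - s ^ 2)⁻¹ • ((JM G - s • 1) * KM G)) =
      (1 - s ^ 2)⁻¹ • ((k : ℂ) • 1 - s • G.adjMatrix ℂ) := by
    rw [Matrix.mul_smul]
    congr 1
    rw [Matrix.sub_mul, Matrix.mul_sub, JM_mul_KM G, Matrix.smul_mul, Matrix.one_mul,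
      Matrix.mul_smul, LMT_mul_KM G, LMT_mul_LM G hreg]
  rw [h3]
  have h4 : (1 : Matrix V V ℂ) - (1 - s ^ 2)⁻¹ • ((k : ℂ) • 1 - s • G.adjMatrix ℂ) =
      (1 - s ^ 2)⁻¹ • ((1 - s ^ 2 - (k : ℂ)) • 1 + s • G.adjMatrix ℂ) := by
    funext i j
    simp only [Matrix.sub_apply, Matrix.add_apply, Matrix.smul_apply, smul_eq_mul]
    field_simp
    ring
  rw [h4, Matrix.det_smul]

lemma det_pair {k : ℕ} (hreg : G.IsRegularOfDegree k) (s : ℂ)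
    (hs : (1 : ℂ) - s ^ 2 ≠ 0) :
    det (s • (1 : Matrix G.Dart G.Dart ℂ) - nbC G) *
      det ((-s) • (1 : Matrix G.Dart G.Dart ℂ) - nbC G) =
      (1 - s ^ 2) ^ (Fintype.card G.Dart) * ((1 - s ^ 2)⁻¹) ^ (2 * Fintype.card V) *
        (det ((1 - s ^ 2 - (k : ℂ)) • (1 : Matrix V V ℂ) + s • G.adjMatrix ℂ) *
          det ((1 - s ^ 2 - (k : ℂ)) • (1 : Matrix V V ℂ) - s • G.adjMatrix ℂ)) := by
  have hs' : (1 : ℂ) - (-s) ^ 2 = 1 - s ^ 2 := by ring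
  rw [det_point G hreg s hs, det_point G hreg (-s) (by rw [hs']; exact hs)]
  rw [hs']
  have hA : (1 - s ^ 2 - (k : ℂ)) • (1 : Matrix V V ℂ) + (-s) • G.adjMatrix ℂ =
      (1 - s ^ 2 - (k : ℂ)) • 1 - s • G.adjMatrix ℂ := by
    rw [neg_smul, ← sub_eq_add_neg]
  rw [hA]
  have hJ : det (s • (1 : Matrix G.Dart G.Dart ℂ) + JM G) *
      det ((-s) • (1 : Matrix G.Dart G.Dart ℂ) + JM G) =
      (1 - s ^ 2) ^ (Fintype.card G.Dart) := by
    rw [← det_mul]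
    have hmul : (s • (1 : Matrix G.Dart G.Dart ℂ) + JM G) * ((-s) • 1 + JM G) =
        (1 - s ^ 2) • 1 := by
      simp only [Matrix.add_mul, Matrix.mul_add, Matrix.smul_mul, Matrix.mul_smul,
        Matrix.one_mul, Matrix.mul_one, JM_mul_JM G, smul_smul]
      module
    rw [hmul, det_smul, det_one, mul_one]
  linear_combination (((1 - s ^ 2)⁻¹) ^ (2 * Fintype.card V) *
    det ((1 - s ^ 2 - (k : ℂ)) • (1 : Matrix V V ℂ) + s • G.adjMatrix ℂ) *
    det ((1 - s ^ 2 - (k : ℂ)) • (1 : Matrix V V ℂ) - s • G.adjMatrix ℂ)) * hJ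

lemma factor_eval (k : ℕ) (x s lam : ℂ) (hs : s ^ 2 = x - 1) :
    (x - muEig k lam 1) * (x - muEig k lam (-1)) =
      ((1 - s ^ 2 - (k : ℂ)) - s * lam) * ((1 - s ^ 2 - (k : ℂ)) + s * lam) := by
  have hw : (((k : ℂ) - 1 - lam ^ 2 / 4) ^ ((1 : ℂ) / 2)) ^ 2 = (k : ℂ) - 1 - lam ^ 2 / 4 :=
    sq_cpow_half _
  unfold muEig
  push_cast
  linear_combination (lam ^ 2) * hw +
    ((1 - s ^ 2 - (k : ℂ)) + (2 - x - (k : ℂ)) + lam ^ 2) * hs +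
    (-(lam ^ 2) * (((k : ℂ) - 1 - lam ^ 2 / 4) ^ ((1 : ℂ) / 2)) ^ 2) * Complex.I_sq


lemma posSupp_map {k : ℕ} (hk : 3 ≤ k) (hreg : G.IsRegularOfDegree k) :
    (posSupp ((grover G) ^ 2)).map (Complex.ofReal ·) = nbC G * nbC G + 1 := by
  rw [posSupp_eq G hk hreg]
  funext e f
  show (Complex.ofReal ((nbR G * nbR G + 1) e f)) = (nbC G * nbC G + 1) e f
  simp only [Matrix.add_apply, Matrix.mul_apply, Matrix.one_apply, nbR, nbC,
    Complex.ofReal_add, Complex.ofReal_sum, Complex.ofReal_mul,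
    apply_ite (Complex.ofReal ·), apply_ite Complex.ofReal,
    Complex.ofReal_one, Complex.ofReal_zero]

end GroverAux

open GroverAux SimpleGraph

/-- for a simple connected `k`-regular graph (`k ≥ 3`), each adjacency
eigenvalue `λ` gives eigenvalues `μ± = (λ² − 2k + 4)/2 ± i λ √(k − 1 − λ²/4)` of `(U²)⁺`,
and the remaining `2(m − n)` eigenvalues of `(U²)⁺` are all `2`:  the characteristic
polynomial factors accordingly. -/
theorem spectrum_posSupp_grover_sq {V : Type*} [Fintype V] [DecidableEq V]
    (G : SimpleGraph V) [DecidableRel G.Adj] (hconn : G.Connected) (k : ℕ) (hk : 3 ≤ k)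
    (hreg : G.IsRegularOfDegree k) :
    (∀ lam : ℝ, lam ∈ spectrum ℝ (G.adjMatrix ℝ) → ∀ s : ℝ, s = 1 ∨ s = -1 →
      muEig k (lam : ℂ) s ∈
        spectrum ℂ ((posSupp ((grover G) ^ 2)).map (Complex.ofReal ·))) ∧
    Matrix.charpoly ((posSupp ((grover G) ^ 2)).map (Complex.ofReal ·)) =
      (X - C 2) ^ (2 * (G.edgeFinset.card - Fintype.card V)) *
        ((Matrix.charpoly (G.adjMatrix ℂ)).roots.map
          (fun lam => (X - C (muEig k lam 1)) * (X - C (muEig k lam (-1))))).prod := by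
  classical
  have hkn : k * Fintype.card V = 2 * G.edgeFinset.card := by
    rw [← G.sum_degrees_eq_twice_card_edges]
    simp [hreg _, Finset.sum_const, Finset.card_univ, mul_comm]
  have hmn : Fintype.card V ≤ G.edgeFinset.card := by
    have h3 : 3 * Fintype.card V ≤ k * Fintype.card V := Nat.mul_le_mul_right _ hk
    omega
  have hDart : Fintype.card G.Dart = 2 * G.edgeFinset.card := G.dart_card_eq_twice_card_edges
  have hchi : Matrix.charpoly (G.adjMatrix ℂ) =
      ((Matrix.charpoly (G.adjMatrix ℂ)).roots.map (fun a => X - C a)).prod :=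
    (IsAlgClosed.splits _).eq_prod_roots_of_monic (Matrix.charpoly_monic _)
  have hcard : Multiset.card (Matrix.charpoly (G.adjMatrix ℂ)).roots = Fintype.card V := by
    rw [Polynomial.splits_iff_card_roots.mp (IsAlgClosed.splits _),
      Matrix.charpoly_natDegree_eq_dim]
  -- the characteristic polynomial identity
  have hpoly : Matrix.charpoly ((posSupp ((grover G) ^ 2)).map (Complex.ofReal ·)) =
      (X - C 2) ^ (2 * (G.edgeFinset.card - Fintype.card V)) *
        ((Matrix.charpoly (G.adjMatrix ℂ)).roots.map
          (fun lam => (X - C (muEig k lam 1)) * (X - C (muEig k lam (-1))))).prod := by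
    apply Polynomial.eq_of_infinite_eval_eq
    apply Set.Infinite.mono (s := ({1, 2} : Set ℂ)ᶜ)
    swap
    · exact Set.Finite.infinite_compl (Set.toFinite _)
    intro x hx
    simp only [Set.mem_compl_iff, Set.mem_insert_iff, Set.mem_singleton_iff, not_or] at hx
    obtain ⟨hx1, hx2⟩ := hx
    show eval x _ = eval x _
    -- set up square root s of x - 1
    set s : ℂ := (x - 1) ^ ((1 : ℂ) / 2) with hs_def
    have hs2 : s ^ 2 = x - 1 := sq_cpow_half _
    have h1s : (1 : ℂ) - s ^ 2 = 2 - x := by rw [hs2]; ring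
    have h2x : (2 : ℂ) - x ≠ 0 := fun h => hx2 (by linear_combination -h)
    have h1s0 : (1 : ℂ) - s ^ 2 ≠ 0 := by rw [h1s]; exact h2x
    have hs0 : s ≠ 0 := by
      intro h
      apply hx1
      have := hs2
      rw [h] at this
      simp at this
      linear_combination -this
    set c : ℂ := 1 - s ^ 2 - (k : ℂ) with hc_def
    set y : ℂ := c / s with hy_def
    have hsy : s * y = c := mul_div_cancel₀ _ hs0
    have heval : ∀ z : ℂ, eval z (Matrix.charpoly (G.adjMatrix ℂ)) =
        ((Matrix.charpoly (G.adjMatrix ℂ)).roots.map (fun a => z - a)).prod := by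
      intro z
      conv_lhs => rw [hchi]
      rw [Polynomial.eval_multiset_prod, Multiset.map_map]
      refine congrArg Multiset.prod (Multiset.map_congr rfl fun a _ => ?_)
      simp
    -- LHS
    rw [GroverAux.eval_charpoly, posSupp_map G hk hreg]
    have hfact : x • (1 : Matrix G.Dart G.Dart ℂ) - (nbC G * nbC G + 1) =
        (-1 : ℂ) • ((s • 1 - nbC G) * ((-s) • 1 - nbC G)) := by
      simp only [Matrix.mul_sub, Matrix.sub_mul, Matrix.mul_add, Matrix.add_mul,
        Matrix.smul_mul, Matrix.mul_smul, Matrix.one_mul, Matrix.mul_one, smul_smul,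
        smul_sub, smul_add]
      have hxs : x • (1 : Matrix G.Dart G.Dart ℂ) = (s * s) • 1 + 1 := by
        have hss : s * s = x - 1 := by rw [← sq]; exact hs2
        rw [hss, sub_smul, one_smul]
        abel
      rw [hxs]
      module
    have hdet1 : det (x • (1 : Matrix G.Dart G.Dart ℂ) - (nbC G * nbC G + 1)) =
        det (s • 1 - nbC G) * det ((-s) • 1 - nbC G) := by
      rw [hfact, Matrix.det_smul, det_mul, hDart, pow_mul]
      norm_num
    rw [hdet1, det_pair G hreg s h1s0]
    -- convert the two vertex determinants
    have hd1 : det ((1 - s ^ 2 - (k : ℂ)) • (1 : Matrix V V ℂ) + s • G.adjMatrix ℂ) =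
        (-s) ^ (Fintype.card V) * eval (-y) (Matrix.charpoly (G.adjMatrix ℂ)) := by
      have hm : (1 - s ^ 2 - (k : ℂ)) • (1 : Matrix V V ℂ) + s • G.adjMatrix ℂ =
          (-s) • ((-y) • 1 - G.adjMatrix ℂ) := by
        funext i j
        simp only [Matrix.smul_apply, Matrix.sub_apply, Matrix.add_apply, smul_eq_mul,
          hy_def, hc_def]
        field_simp
        ring
      rw [hm, Matrix.det_smul, ← GroverAux.eval_charpoly]
    have hd2 : det ((1 - s ^ 2 - (k : ℂ)) • (1 : Matrix V V ℂ) - s • G.adjMatrix ℂ) =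
        s ^ (Fintype.card V) * eval y (Matrix.charpoly (G.adjMatrix ℂ)) := by
      have hm : (1 - s ^ 2 - (k : ℂ)) • (1 : Matrix V V ℂ) - s • G.adjMatrix ℂ =
          s • (y • 1 - G.adjMatrix ℂ) := by
        funext i j
        simp only [Matrix.smul_apply, Matrix.sub_apply, smul_eq_mul, hy_def, hc_def]
        field_simp
      rw [hm, Matrix.det_smul, ← GroverAux.eval_charpoly]
    rw [hd1, hd2]
    -- RHS
    rw [eval_mul, eval_pow, eval_sub, eval_X, eval_C, Polynomial.eval_multiset_prod,
      Multiset.map_map]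
    have hper : ∀ lam : ℂ,
        (eval x ∘ fun lam => (X - C (muEig k lam 1)) * (X - C (muEig k lam (-1)))) lam =
        (s * (y - lam)) * ((-s) * ((-y) - lam)) := by
      intro lam
      simp only [Function.comp_apply, eval_mul, eval_sub, eval_X, eval_C]
      rw [factor_eval k x s lam hs2, ← hc_def]
      linear_combination (-(c + s * y)) * hsy
    rw [Multiset.map_congr rfl fun a _ => hper a]
    rw [show (fun lam => (s * (y - lam)) * ((-s) * ((-y) - lam))) =
        (fun lam => (fun l => s * (y - l)) lam * (fun l => (-s) * ((-y) - l)) lam) from rfl,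
      Multiset.prod_map_mul]
    rw [show (fun l : ℂ => s * (y - l)) = (fun l : ℂ => (fun _ : ℂ => s) l * (fun a : ℂ => y - a) l) from rfl,
      Multiset.prod_map_mul]
    rw [show (fun l : ℂ => (-s) * ((-y) - l)) =
        (fun l : ℂ => (fun _ : ℂ => (-s)) l * (fun a : ℂ => (-y) - a) l) from rfl,
      Multiset.prod_map_mul]
    rw [Multiset.map_const', Multiset.prod_replicate, Multiset.map_const',
      Multiset.prod_replicate, hcard, ← heval, ← heval]
    -- power bookkeeping
    have hpow : ((1 : ℂ) - s ^ 2) ^ (Fintype.card G.Dart) *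
        ((1 - s ^ 2)⁻¹) ^ (2 * Fintype.card V) =
        (x - 2) ^ (2 * (G.edgeFinset.card - Fintype.card V)) := by
      rw [h1s, hDart]
      have hsplit : 2 * G.edgeFinset.card =
          2 * Fintype.card V + 2 * (G.edgeFinset.card - Fintype.card V) := by omega
      rw [hsplit, pow_add, mul_comm ((2 - x) ^ (2 * Fintype.card V)) _, mul_assoc,
        ← mul_pow, mul_inv_cancel₀ h2x, one_pow, mul_one]
      rw [pow_mul, pow_mul, show ((2 : ℂ) - x) ^ 2 = (x - 2) ^ 2 by ring]
    rw [← hpow]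
    ring
  refine ⟨?_, hpoly⟩
  -- part 1
  intro lam hlam sgn hsgn
  have hdetR : det ((lam : ℝ) • (1 : Matrix V V ℝ) - G.adjMatrix ℝ) = 0 :=
    (mem_spectrum_iff_det _ _).mp hlam
  have hdetC : det ((lam : ℂ) • (1 : Matrix V V ℂ) - G.adjMatrix ℂ) = 0 := by
    have hmap : ((lam : ℝ) • (1 : Matrix V V ℝ) - G.adjMatrix ℝ).map Complex.ofRealHom =
        (lam : ℂ) • (1 : Matrix V V ℂ) - G.adjMatrix ℂ := by
      funext i j
      simp only [Matrix.map_apply, Matrix.sub_apply, Matrix.smul_apply, Matrix.one_apply,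
        SimpleGraph.adjMatrix_apply, smul_eq_mul]
      push_cast [apply_ite (Complex.ofReal ·)]
      ring_nf
      split_ifs <;> simp
    have h1 : Complex.ofRealHom (det ((lam : ℝ) • (1 : Matrix V V ℝ) - G.adjMatrix ℝ)) =
        det (((lam : ℝ) • (1 : Matrix V V ℝ) - G.adjMatrix ℝ).map Complex.ofRealHom) := by
      rw [RingHom.map_det]
      rfl
    rw [hmap] at h1
    rw [← h1, hdetR, map_zero]
  have hroot : (lam : ℂ) ∈ (Matrix.charpoly (G.adjMatrix ℂ)).roots := by
    rw [Polynomial.mem_roots']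
    exact ⟨(Matrix.charpoly_monic _).ne_zero, by
      rw [Polynomial.IsRoot, GroverAux.eval_charpoly]; exact hdetC⟩
  rw [mem_spectrum_iff_det, ← GroverAux.eval_charpoly, hpoly, eval_mul]
  have hzero : eval (muEig k (lam : ℂ) sgn)
      (((Matrix.charpoly (G.adjMatrix ℂ)).roots.map
        (fun l => (X - C (muEig k l 1)) * (X - C (muEig k l (-1))))).prod) = 0 := by
    rw [Polynomial.eval_multiset_prod]
    apply Multiset.prod_eq_zero
    rw [Multiset.map_map]
    refine Multiset.mem_map.mpr ⟨(lam : ℂ), hroot, ?_⟩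
    simp only [Function.comp_apply, eval_mul, eval_sub, eval_X, eval_C]
    rcases hsgn with h | h <;> subst h
    · rw [sub_self, zero_mul]
    · rw [sub_self, mul_zero]
  rw [hzero, mul_zero]
end

section
/- Let G be a connected graph with n vertices and m edges, and define f_G(u) = det(Iₙ − u·A + u²(D − Iₙ)). Then f_G(1) = 0 and the derivative satisfies f_G'(1) = 2(m − n)·κ(G), where κ(G) is the number of spanning trees of G. -/
open Matrix

/-- The diagonal degree matrix of a graph. -/
noncomputable def degMatrix {V : Type*} [Fintype V] [DecidableEq V] (G : SimpleGraph V)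
    [DecidableRel G.Adj] : Matrix V V ℝ := Matrix.diagonal fun v => (G.degree v : ℝ)

/-- The number of spanning trees (complexity) of a graph. -/
noncomputable def numSpanningTrees {V : Type*} [Fintype V] (G : SimpleGraph V) : ℕ :=
  Nat.card {H : G.Subgraph // H.IsSpanning ∧ H.spanningCoe.IsTree}

/-- The Ihara polynomial `f_G(u) = det(I_n − u A + u² (D − I_n))` as a function of `u`. -/
noncomputable def iharaPoly {V : Type*} [Fintype V] [DecidableEq V] (G : SimpleGraph V)
    [DecidableRel G.Adj] : ℝ → ℝ := fun u =>
  ((1 : Matrix V V ℝ) - u • G.adjMatrix ℝ + (u ^ 2) • (degMatrix G - 1)).det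

namespace IharaAux
variable {V : Type*} [Fintype V] [DecidableEq V]
open scoped Classical

noncomputable def xe (e : Sym2 V) : V → ℝ :=
  Pi.single (Quot.out e).1 1 - Pi.single (Quot.out e).2 1

lemma xe_spec {e : Sym2 V} (he : ¬ e.IsDiag) :
    ∃ a b : V, a ≠ b ∧ e = s(a, b) ∧ xe e = Pi.single a 1 - Pi.single b 1 := by
  refine ⟨(Quot.out e).1, (Quot.out e).2, ?_, ?_, rfl⟩
  · intro h
    apply he
    have h2 : e = s((Quot.out e).1, (Quot.out e).2) := by
      conv_lhs => rw [← Quot.out_eq e]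
    rw [h2, h]
    exact Sym2.isDiag_iff_proj_eq |>.mpr rfl
  · conv_lhs => rw [← Quot.out_eq e]

noncomputable def gram {W : Type*} (w : W → V → ℝ) (t : Finset W) : Matrix V V ℝ :=
  ∑ a ∈ t, vecMulVec (w a) (w a)

lemma gram_apply {W : Type*} (w : W → V → ℝ) (t : Finset W) (i j : V) :
    gram w t i j = ∑ a ∈ t, w a i * w a j := by
  simp [gram, Matrix.sum_apply, vecMulVec_apply]

lemma gram_mulVec {W : Type*} (w : W → V → ℝ) (t : Finset W) (x : V → ℝ) :
    gram w t *ᵥ x = ∑ a ∈ t, (w a ⬝ᵥ x) • (w a) := by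
  ext i
  simp only [Matrix.mulVec, dotProduct, gram_apply, Finset.sum_apply, Pi.smul_apply,
    smul_eq_mul, Finset.sum_mul]
  rw [Finset.sum_comm]
  refine Finset.sum_congr rfl fun a _ => Finset.sum_congr rfl fun j _ => by ring

noncomputable def wfun (v₀ : V) : Option (Sym2 V) → V → ℝ
  | none => Pi.single v₀ 1
  | some e => xe e

@[simp] lemma wfun_none (v₀ : V) : wfun v₀ none = Pi.single v₀ 1 := rfl
@[simp] lemma wfun_some (v₀ : V) (e : Sym2 V) : wfun v₀ (some e) = xe e := rfl

lemma gram_insert_none_apply (v₀ : V) (T' : Finset (Sym2 V)) (i j : V) :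
    gram (wfun v₀) (insert none (T'.image some)) i j
      = (Pi.single v₀ 1 : V → ℝ) i * (Pi.single v₀ 1 : V → ℝ) j + ∑ e ∈ T', xe e i * xe e j := by
  rw [gram_apply, Finset.sum_insert (by simp)]
  congr 1
  rw [Finset.sum_image (by intros; simp_all)]
  rfl

/-- a singleton dot product helper -/
lemma single_dot (v₀ : V) (x : V → ℝ) : (Pi.single v₀ 1 : V → ℝ) ⬝ᵥ x = x v₀ := by
  simp [dotProduct, Pi.single_apply]

lemma xe_dot {e : Sym2 V} (he : ¬ e.IsDiag) {x : V → ℝ}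
    (hx : ∀ a b : V, e = s(a, b) → x a = x b) : xe e ⬝ᵥ x = 0 := by
  obtain ⟨a, b, hab, rfl, hxe⟩ := xe_spec he
  rw [hxe]
  simp only [dotProduct, Pi.sub_apply, Pi.single_apply, sub_mul, ite_mul, one_mul, zero_mul]
  rw [Finset.sum_sub_distrib]
  simp only [Finset.sum_ite_eq', Finset.mem_univ, if_true]
  rw [hx a b rfl, sub_self]

/-- Case: `none ∉ T`. -/
lemma det_gram_no_none (v₀ : V) [Nonempty V] (T' : Finset (Sym2 V))
    (hd : ∀ e ∈ T', ¬ e.IsDiag) :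
    (gram (wfun v₀) (T'.image some)).det = 0 := by
  rw [← Matrix.exists_mulVec_eq_zero_iff]
  refine ⟨fun _ => 1, ?_, ?_⟩
  · intro h
    have := congrFun h (Classical.arbitrary V)
    simp at this
  · rw [gram_mulVec]
    apply Finset.sum_eq_zero
    intro a ha
    rw [Finset.mem_image] at ha
    obtain ⟨e, he, rfl⟩ := ha
    rw [wfun_some, xe_dot (hd e he) (by intros; rfl), zero_smul]

/-- Case: `none ∈ T` but the edge graph is not connected. -/
lemma det_gram_not_connected (v₀ : V) [Nonempty V] (T' : Finset (Sym2 V))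
    (hd : ∀ e ∈ T', ¬ e.IsDiag)
    (hnc : ¬ (SimpleGraph.fromEdgeSet (↑T' : Set (Sym2 V))).Connected) :
    (gram (wfun v₀) (insert none (T'.image some))).det = 0 := by
  set H := SimpleGraph.fromEdgeSet (↑T' : Set (Sym2 V)) with hH
  have hp : ¬ H.Preconnected := by
    intro hp
    exact hnc ((SimpleGraph.connected_iff H).mpr ⟨hp, inferInstance⟩)
  rw [SimpleGraph.Preconnected] at hp
  push_neg at hp
  obtain ⟨u, u', huu⟩ := hp
  have key : ∃ aw : V, ¬ H.Reachable aw v₀ := by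
    by_cases h1 : H.Reachable u v₀
    · by_cases h2 : H.Reachable u' v₀
      · exact absurd (h1.trans h2.symm) huu
      · exact ⟨u', h2⟩
    · exact ⟨u, h1⟩
  obtain ⟨aw, haw⟩ := key
  rw [← Matrix.exists_mulVec_eq_zero_iff]
  refine ⟨fun v => if H.Reachable v aw then 1 else 0, ?_, ?_⟩
  · intro h
    have := congrFun h aw
    simp [SimpleGraph.Reachable.refl] at this
  · rw [gram_mulVec]
    apply Finset.sum_eq_zero
    intro a ha
    rw [Finset.mem_insert] at ha
    rcases ha with rfl | ha
    · rw [wfun_none, single_dot]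
      rw [if_neg (fun hr => haw hr.symm), zero_smul]
    · rw [Finset.mem_image] at ha
      obtain ⟨e, he, rfl⟩ := ha
      rw [wfun_some, xe_dot (hd e he), zero_smul]
      intro a b hab
      have hadj : H.Adj a b := by
        rw [hH, SimpleGraph.fromEdgeSet_adj]
        constructor
        · rw [← hab]; exact_mod_cast he
        · intro h; apply hd e he; rw [hab, h]; exact Sym2.isDiag_iff_proj_eq |>.mpr rfl
      by_cases h : H.Reachable a aw
      · rw [if_pos h, if_pos (hadj.symm.reachable.trans h)]
      · rw [if_neg h, if_neg (fun h' => h (hadj.reachable.trans h'))]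


variable {W : Type*} [DecidableEq W]

lemma gram_det_expand (w : W → V → ℝ) (t : Finset W) :
    (gram w t).det = ∑ f ∈ Fintype.piFinset (fun _ : V => t),
      (∏ v, w (f v) v) * (Matrix.of fun v u => w (f v) u).det := by
  have hrows : gram w t = Matrix.of (fun v => ∑ a ∈ t, (w a v) • (w a)) := by
    ext i j
    simp [gram_apply, Finset.sum_apply]
  have : (gram w t).det
      = (Matrix.detRowAlternating : (V → ℝ) [⋀^V]→ₗ[ℝ] ℝ)
          (fun v => ∑ a ∈ t, (w a v) • (w a)) := by
    rw [hrows]; rfl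
  rw [this]
  have hms := (Matrix.detRowAlternating :
      (V → ℝ) [⋀^V]→ₗ[ℝ] ℝ).toMultilinearMap.map_sum_finset
      (fun v a => (w a v) • (w a)) (fun _ => t)
  simp only [AlternatingMap.coe_multilinearMap] at hms
  rw [hms]
  refine Finset.sum_congr rfl fun f _ => ?_
  have := (Matrix.detRowAlternating :
      (V → ℝ) [⋀^V]→ₗ[ℝ] ℝ).toMultilinearMap.map_smul_univ
      (fun v => w (f v) v) (fun v => w (f v))
  simp only [AlternatingMap.coe_multilinearMap] at this ⊢
  rw [this, smul_eq_mul]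
  rfl

lemma term_zero_of_not_inj (w : W → V → ℝ) {f : V → W} (hf : ¬ Function.Injective f) :
    (∏ v, w (f v) v) * (Matrix.of fun v u => w (f v) u).det = 0 := by
  rw [Function.not_injective_iff] at hf
  obtain ⟨i, j, hij, hne⟩ := hf
  have : (Matrix.of fun v u => w (f v) u).det = 0 :=
    Matrix.det_zero_of_row_eq hne (by ext u; simp [hij])
  rw [this, mul_zero]

lemma gram_det_sum_subsets (w : W → V → ℝ) (s : Finset W) :
    (gram w s).det = ∑ T ∈ s.powersetCard (Fintype.card V), (gram w T).det := by
  classical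
  set term : (V → W) → ℝ :=
    fun f => (∏ v, w (f v) v) * (Matrix.of fun v u => w (f v) u).det with hterm
  have hTZ : ∀ f : V → W, term f ≠ 0 → Function.Injective f := by
    intro f h
    by_contra hni
    exact h (term_zero_of_not_inj w hni)
  have key : ∀ t : Finset W, (gram w t).det = ∑ f ∈ Fintype.piFinset (fun _ : V => t), term f :=
    fun t => gram_det_expand w t
  rw [key]
  have hR : ∀ T ∈ s.powersetCard (Fintype.card V),
      (gram w T).det = ∑ f ∈ ((Fintype.piFinset (fun _ : V => s)).filter
          (fun f => Function.Injective f)).filter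
          (fun f => Finset.image f Finset.univ = T), term f := by
    intro T hT
    rw [Finset.mem_powersetCard] at hT
    rw [key]
    refine (Finset.sum_subset ?_ ?_).symm
    · intro f hf
      simp only [Finset.mem_filter] at hf
      obtain ⟨⟨hfs, _⟩, himg⟩ := hf
      rw [Fintype.mem_piFinset] at hfs ⊢
      intro v
      rw [← himg]
      exact Finset.mem_image_of_mem f (Finset.mem_univ v)
    · intro f hf hnf
      by_contra h
      have hinj : Function.Injective f := hTZ f h
      apply hnf
      simp only [Finset.mem_filter]
      have hsub : Finset.image f Finset.univ ⊆ T := by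
        intro x hx
        rw [Finset.mem_image] at hx
        obtain ⟨v, _, rfl⟩ := hx
        rw [Fintype.mem_piFinset] at hf
        exact hf v
      have himg : Finset.image f Finset.univ = T := by
        apply Finset.eq_of_subset_of_card_le hsub
        rw [Finset.card_image_of_injective _ hinj, Finset.card_univ, hT.2]
      refine ⟨⟨?_, hinj⟩, himg⟩
      rw [Fintype.mem_piFinset]
      intro v
      exact hT.1 (hsub (Finset.mem_image_of_mem f (Finset.mem_univ v)))
  rw [Finset.sum_congr rfl hR]
  have hmaps : ∀ f ∈ (Fintype.piFinset (fun _ : V => s)).filter (fun f => Function.Injective f),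
      Finset.image f Finset.univ ∈ s.powersetCard (Fintype.card V) := by
    intro f hf
    simp only [Finset.mem_filter, Fintype.mem_piFinset] at hf
    rw [Finset.mem_powersetCard]
    constructor
    · intro x hx
      rw [Finset.mem_image] at hx
      obtain ⟨v, _, rfl⟩ := hx
      exact hf.1 v
    · rw [Finset.card_image_of_injective _ hf.2, Finset.card_univ]
  rw [Finset.sum_fiberwise_of_maps_to hmaps term]
  exact (Finset.sum_filter_of_ne (fun f _ h => hTZ f h)).symm


lemma xe_mul_apply {G : SimpleGraph V} {e : Sym2 V}
    (he : e ∈ G.edgeSet) (i j : V) :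
    xe e i * xe e j = (if i = j ∧ i ∈ e then (1:ℝ) else 0)
      - (if i ≠ j ∧ e = s(i, j) then 1 else 0) := by
  obtain ⟨a, b, hab, heq, hx⟩ := xe_spec (G.not_isDiag_of_mem_edgeSet he)
  subst heq
  rw [hx]
  simp only [Pi.sub_apply, Pi.single_apply, Sym2.mem_iff, Sym2.eq_iff, ne_eq]
  by_cases h1 : i = a <;> by_cases h2 : i = b <;> by_cases h3 : j = a <;> by_cases h4 : j = b <;>
    subst_eqs <;> simp_all <;> (try norm_num) <;> (try split_ifs) <;> simp_all [eq_comm]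

lemma sum_xe_eq_lap (G : SimpleGraph V) [DecidableRel G.Adj] (i j : V) :
    ∑ e ∈ G.edgeFinset, xe e i * xe e j = G.lapMatrix ℝ i j := by
  have h1 : ∀ e ∈ G.edgeFinset, xe e i * xe e j
      = (if i = j ∧ i ∈ e then (1:ℝ) else 0) - (if i ≠ j ∧ e = s(i, j) then 1 else 0) := by
    intro e he
    exact xe_mul_apply (SimpleGraph.mem_edgeFinset.mp he) i j
  rw [Finset.sum_congr rfl h1, Finset.sum_sub_distrib]
  have h2 : ∑ e ∈ G.edgeFinset, (if i = j ∧ i ∈ e then (1:ℝ) else 0)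
      = if i = j then (G.degree i : ℝ) else 0 := by
    by_cases hij : i = j
    · subst hij
      simp only [true_and, if_true]
      rw [Finset.sum_boole]
      congr 1
      have : G.edgeFinset.filter (fun e => i ∈ e) = G.incidenceFinset i := by
        ext e
        simp [SimpleGraph.mem_incidenceFinset, SimpleGraph.incidenceSet,
          SimpleGraph.mem_edgeFinset]
      rw [this, SimpleGraph.card_incidenceFinset_eq_degree]
    · simp [hij]
  have h3 : ∑ e ∈ G.edgeFinset, (if i ≠ j ∧ e = s(i, j) then (1:ℝ) else 0)
      = if G.Adj i j then 1 else 0 := by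
    by_cases hadj : G.Adj i j
    · have hne : i ≠ j := hadj.ne
      have hmem : s(i, j) ∈ G.edgeFinset := by
        rw [SimpleGraph.mem_edgeFinset]; exact hadj
      simp only [hne, ne_eq, not_false_eq_true, true_and, hadj, if_true]
      simp [Finset.sum_ite_eq, hmem]
    · simp only [hadj, if_false]
      apply Finset.sum_eq_zero
      intro e he
      rw [if_neg]
      rintro ⟨hne, rfl⟩
      exact hadj (SimpleGraph.mem_edgeFinset.mp he)
  rw [h2, h3]
  simp [SimpleGraph.lapMatrix, SimpleGraph.degMatrix, Matrix.diagonal_apply,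
    SimpleGraph.adjMatrix_apply]


/-- parent vertex existence in a connected graph -/
lemma exists_parent {H : SimpleGraph V} (hc : H.Connected) {v v₀ : V} (hv : v ≠ v₀) :
    ∃ w, H.Adj v w ∧ H.dist w v₀ + 1 = H.dist v v₀ := by
  have hr : H.Reachable v v₀ := hc.preconnected v v₀
  obtain ⟨p, hp⟩ := hr.exists_walk_length_eq_dist
  have hd0 : H.dist v v₀ ≠ 0 := by
    intro h
    rcases SimpleGraph.dist_eq_zero_iff_eq_or_not_reachable.mp h with h' | h'
    · exact hv h'
    · exact h' hr
  cases p with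
  | nil => exact absurd hp.symm (by simpa using hd0)
  | cons h q =>
    rename_i w
    refine ⟨w, h, ?_⟩
    have h1 : H.dist w v₀ ≤ q.length := SimpleGraph.dist_le q
    have h2 : q.length + 1 = H.dist v v₀ := by
      simpa [SimpleGraph.Walk.length_cons] using hp
    have h3 : H.dist v v₀ ≤ 1 + H.dist w v₀ := by
      calc H.dist v v₀ ≤ H.dist v w + H.dist w v₀ := hc.dist_triangle
        _ ≤ 1 + H.dist w v₀ := by
            have : H.dist v w ≤ 1 := by
              simpa using SimpleGraph.dist_le (SimpleGraph.Walk.cons h SimpleGraph.Walk.nil)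
            omega
    omega

/-- Case: `none ∈ T` and the edge graph is connected: determinant 1. -/
lemma det_gram_connected (v₀ : V) (T' : Finset (Sym2 V))
    (hd : ∀ e ∈ T', ¬ e.IsDiag)
    (hcard : T'.card + 1 = Fintype.card V)
    (hc : (SimpleGraph.fromEdgeSet (↑T' : Set (Sym2 V))).Connected) :
    (gram (wfun v₀) (insert none (T'.image some))).det = 1 := by
  set H := SimpleGraph.fromEdgeSet (↑T' : Set (Sym2 V)) with hH
  set d : V → ℕ := fun v => H.dist v v₀ with hdd
  have hpar : ∀ v : V, v ≠ v₀ → ∃ w, H.Adj v w ∧ d w + 1 = d v :=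
    fun v hv => exists_parent hc hv
  set p : V → V := fun v => if h : v = v₀ then v₀ else Classical.choose (hpar v h) with hp
  have hpadj : ∀ v : V, v ≠ v₀ → H.Adj v (p v) := by
    intro v hv
    rw [hp]; simp only [hv, dif_neg]
    exact (Classical.choose_spec (hpar v hv)).1
  have hpd : ∀ v : V, v ≠ v₀ → d (p v) + 1 = d v := by
    intro v hv
    rw [hp]; simp only [hv, dif_neg]
    exact (Classical.choose_spec (hpar v hv)).2
  set Z : Matrix V V ℝ := Matrix.of
    (fun v => if v = v₀ then (Pi.single v₀ 1 : V → ℝ)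
      else (Pi.single v 1 - Pi.single (p v) 1)) with hZ
  have hZval : ∀ a b : V, Z a b = if a = v₀ then (if b = v₀ then (1:ℝ) else 0)
      else ((if b = a then (1:ℝ) else 0) - (if b = p a then 1 else 0)) := by
    intro a b
    rw [hZ]
    by_cases h : a = v₀ <;> simp [h, Matrix.of_apply, Pi.single_apply]
  have hd0 : d v₀ = 0 := by simp [hdd]
  have hdz : ∀ v : V, d v = 0 → v = v₀ := by
    intro v hv
    rcases SimpleGraph.dist_eq_zero_iff_eq_or_not_reachable.mp hv with h | h
    · exact h
    · exact absurd (hc.preconnected v v₀) h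
  -- 1) Zᵀ * Z = gram
  have hZZ : Zᵀ * Z = gram (wfun v₀) (insert none (T'.image some)) := by
    ext i j
    rw [Matrix.mul_apply]
    have htr : ∀ v : V, Zᵀ i v * Z v j = Z v i * Z v j := by
      intro v; rw [Matrix.transpose_apply]
    rw [Finset.sum_congr rfl fun v _ => htr v]
    rw [gram_insert_none_apply]
    rw [← Finset.add_sum_erase Finset.univ _ (Finset.mem_univ v₀)]
    congr 1
    · rw [hZval, hZval, if_pos rfl, if_pos rfl]
      simp [Pi.single_apply]
    · have hinj : ∀ x ∈ Finset.univ.erase v₀, ∀ y ∈ Finset.univ.erase v₀,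
          s(x, p x) = s(y, p y) → x = y := by
        intro x hx y hy hxy
        rw [Finset.mem_erase] at hx hy
        rcases Sym2.eq_iff.mp hxy with ⟨h1, _⟩ | ⟨h1, h2⟩
        · exact h1
        · have e1 := hpd x hx.1
          have e2 := hpd y hy.1
          rw [← h1] at e2
          rw [h2] at e1
          omega
      have himg : (Finset.univ.erase v₀).image (fun v => s(v, p v)) = T' := by
        apply Finset.eq_of_subset_of_card_le
        · intro e he
          rw [Finset.mem_image] at he
          obtain ⟨v, hv, rfl⟩ := he
          rw [Finset.mem_erase] at hv
          have := (SimpleGraph.fromEdgeSet_adj _).mp (hH ▸ hpadj v hv.1)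
          exact_mod_cast this.1
        · rw [Finset.card_image_of_injOn hinj]
          rw [Finset.card_erase_of_mem (Finset.mem_univ v₀), Finset.card_univ]
          omega
      rw [← himg, Finset.sum_image hinj]
      refine Finset.sum_congr rfl fun v hv => ?_
      rw [Finset.mem_erase] at hv
      have hdiag : ¬ (s(v, p v) : Sym2 V).IsDiag := by
        rw [Sym2.isDiag_iff_proj_eq]
        exact fun h => (hpadj v hv.1).ne h
      obtain ⟨a, b, hab, he, hx⟩ := xe_spec hdiag
      rw [hZval, hZval, if_neg hv.1, if_neg hv.1, hx]
      simp only [Pi.sub_apply, Pi.single_apply]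
      rcases Sym2.eq_iff.mp he with ⟨h1, h2⟩ | ⟨h1, h2⟩
      · rw [← h1, ← h2]
      · rw [← h1, ← h2]
        ring
  -- 2) Z is block triangular for -(distance to the root)
  have hBT : Z.BlockTriangular (fun v => -(d v : ℤ)) := by
    intro i j hij
    simp only [neg_lt_neg_iff, Nat.cast_lt] at hij
    rw [hZval]
    by_cases hi : i = v₀
    · have hj : j ≠ v₀ := by intro h; rw [hi, h] at hij; omega
      rw [if_pos hi, if_neg hj]
    · have h1 : j ≠ i := by intro h; rw [h] at hij; omega
      have h2 : j ≠ p i := by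
        intro h
        have := hpd i hi
        rw [← h] at this
        omega
      rw [if_neg hi, if_neg h1, if_neg h2, sub_zero]
  -- 3) each diagonal block is the identity matrix
  have hdetZ : Z.det = 1 := by
    rw [hBT.det]
    apply Finset.prod_eq_one
    intro a _
    have hblock : Z.toSquareBlock (fun v => -(d v : ℤ)) a = 1 := by
      ext ⟨i, hi⟩ ⟨j, hj⟩
      have hi' : -(d i : ℤ) = a := hi
      have hj' : -(d j : ℤ) = a := hj
      have hij : d i = d j := by omega
      rw [Matrix.toSquareBlock_def]
      simp only [Matrix.of_apply]
      by_cases hiv : i = v₀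
      · have hjv : j = v₀ := hdz j (by rw [← hij, hiv, hd0])
        rw [hZval]
        simp [hiv, hjv, Matrix.one_apply]
      · have h2 : j ≠ p i := by
          intro h
          have := hpd i hiv
          rw [← h] at this
          omega
        rw [hZval, if_neg hiv, if_neg h2, sub_zero, Matrix.one_apply]
        simp only [Subtype.mk.injEq]
        by_cases h : i = j <;> simp [h, eq_comm]
    rw [hblock, Matrix.det_one]
  rw [← hZZ, Matrix.det_mul, Matrix.det_transpose, hdetZ, mul_one]
/-- A connected graph has at least `card V - 1` edges. -/
lemma card_le_edges_of_connected {K : SimpleGraph V} [Fintype K.edgeSet]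
    (hc : K.Connected) (v₀ : V) :
    Fintype.card V ≤ K.edgeFinset.card + 1 := by
  have hpar : ∀ v : V, v ≠ v₀ → ∃ w, K.Adj v w ∧ K.dist w v₀ + 1 = K.dist v v₀ :=
    fun v hv => exists_parent hc hv
  set p : V → V := fun v => if h : v = v₀ then v₀ else Classical.choose (hpar v h) with hp
  have hpadj : ∀ v : V, v ≠ v₀ → K.Adj v (p v) := by
    intro v hv
    rw [hp]; simp only [hv, dif_neg]
    exact (Classical.choose_spec (hpar v hv)).1
  have hpd : ∀ v : V, v ≠ v₀ → K.dist (p v) v₀ + 1 = K.dist v v₀ := by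
    intro v hv
    rw [hp]; simp only [hv, dif_neg]
    exact (Classical.choose_spec (hpar v hv)).2
  have hinj : ∀ x ∈ Finset.univ.erase v₀, ∀ y ∈ Finset.univ.erase v₀,
      s(x, p x) = s(y, p y) → x = y := by
    intro x hx y hy hxy
    rw [Finset.mem_erase] at hx hy
    rcases Sym2.eq_iff.mp hxy with ⟨h1, _⟩ | ⟨h1, h2⟩
    · exact h1
    · have e1 := hpd x hx.1
      have e2 := hpd y hy.1
      rw [← h1] at e2
      rw [h2] at e1
      omega
  have hmaps : ∀ x ∈ Finset.univ.erase v₀, s(x, p x) ∈ K.edgeFinset := by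
    intro x hx
    rw [Finset.mem_erase] at hx
    rw [SimpleGraph.mem_edgeFinset]
    exact (hpadj x hx.1)
  have := Finset.card_le_card_of_injOn _ hmaps (fun x hx y hy => hinj x hx y hy)
  rw [Finset.card_erase_of_mem (Finset.mem_univ v₀), Finset.card_univ] at this
  omega

/-- A connected graph with `card V - 1` edges is a tree. -/
lemma isTree_of_connected_of_card {K : SimpleGraph V} [Fintype K.edgeSet]
    (hc : K.Connected) (hcard : K.edgeFinset.card + 1 = Fintype.card V) :
    K.IsTree := by
  rw [SimpleGraph.isTree_iff]
  refine ⟨hc, ?_⟩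
  intro v c hcyc
  -- take an edge of the cycle
  have hne : c.edges ≠ [] := by
    intro h
    have h3 := hcyc.three_le_length
    have : c.edges.length = c.length := SimpleGraph.Walk.length_edges c
    rw [h] at this
    simp at this
    omega
  obtain ⟨e, he⟩ := List.exists_mem_of_ne_nil _ hne
  induction e using Sym2.ind with
  | _ x y =>
  have hadjr : K.Adj x y ∧ (K \ SimpleGraph.fromEdgeSet {s(x, y)}).Reachable x y :=
    SimpleGraph.adj_and_reachable_delete_edges_iff_exists_cycle.mpr ⟨v, c, hcyc, he⟩
  set K' := K \ SimpleGraph.fromEdgeSet {s(x, y)} with hK'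
  have hK'adj : ∀ a b : V, K'.Adj a b ↔ K.Adj a b ∧ s(a, b) ≠ s(x, y) := by
    intro a b
    rw [hK']
    rw [SimpleGraph.sdiff_adj, SimpleGraph.fromEdgeSet_adj]
    constructor
    · rintro ⟨h1, h2⟩
      refine ⟨h1, fun h => h2 ⟨by simp [h], h1.ne⟩⟩
    · rintro ⟨h1, h2⟩
      exact ⟨h1, fun h => h2 (by simpa using h.1)⟩
  have hstep : ∀ a b : V, K.Adj a b → K'.Reachable a b := by
    intro a b hab
    by_cases h : s(a, b) = s(x, y)
    · rcases Sym2.eq_iff.mp h with ⟨h1, h2⟩ | ⟨h1, h2⟩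
      · subst h1; subst h2; exact hadjr.2
      · subst h1; subst h2; exact hadjr.2.symm
    · exact ((hK'adj a b).mpr ⟨hab, h⟩).reachable
  have hK'conn : K'.Connected := by
    rw [SimpleGraph.connected_iff]
    refine ⟨?_, hc.nonempty⟩
    intro a b
    obtain ⟨w⟩ := hc.preconnected a b
    induction w with
    | nil => rfl
    | cons h q ih => exact (hstep _ _ h).trans ih
  have hK'edges : K'.edgeFinset = K.edgeFinset.erase s(x, y) := by
    ext f
    rw [SimpleGraph.mem_edgeFinset, Finset.mem_erase, SimpleGraph.mem_edgeFinset]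
    rw [hK']
    have : (K \ SimpleGraph.fromEdgeSet {s(x, y)}).edgeSet
        = K.edgeSet \ (SimpleGraph.fromEdgeSet {s(x, y)}).edgeSet := SimpleGraph.edgeSet_sdiff _ _
    rw [this]
    simp only [Set.mem_diff, SimpleGraph.edgeSet_fromEdgeSet]
    constructor
    · rintro ⟨h1, h2⟩
      refine ⟨fun h => h2 ⟨by simp [h], ?_⟩, h1⟩
      rw [h]
      exact K.not_isDiag_of_mem_edgeSet (h ▸ h1)
    · rintro ⟨h1, h2⟩
      refine ⟨h2, ?_⟩
      rintro ⟨h3, _⟩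
      simp only [Set.mem_singleton_iff] at h3
      exact h1 h3
  have hxy_mem : s(x, y) ∈ K.edgeFinset := by
    rw [SimpleGraph.mem_edgeFinset]
    exact hadjr.1
  have hcard' := card_le_edges_of_connected hK'conn v
  rw [hK'edges, Finset.card_erase_of_mem hxy_mem] at hcard'
  have hpos : 1 ≤ K.edgeFinset.card := Finset.card_pos.mpr ⟨_, hxy_mem⟩
  omega
section Classify
variable (G : SimpleGraph V) [DecidableRel G.Adj]

/-- the base index set: the artificial `none` element together with all edges -/
noncomputable def baseSet : Finset (Option (Sym2 V)) :=
  insert none (G.edgeFinset.image some)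

lemma eraseNone_subset_edgeFinset {T : Finset (Option (Sym2 V))} (hT : T ⊆ baseSet G) :
    Finset.eraseNone T ⊆ G.edgeFinset := by
  intro e he
  rw [Finset.mem_eraseNone] at he
  have := hT he
  rw [baseSet, Finset.mem_insert] at this
  rcases this with h | h
  · exact absurd h (by simp)
  · rw [Finset.mem_image] at h
    obtain ⟨e', he', hee⟩ := h
    cases hee
    exact he'

lemma insert_none_eraseNone {T : Finset (Option (Sym2 V))} (hn : none ∈ T) :
    insert none ((Finset.eraseNone T).image some) = T := by
  ext o
  cases o with
  | none => simp [hn]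
  | some e => simp [Finset.mem_eraseNone]

lemma eraseNone_card {T : Finset (Option (Sym2 V))} (hn : none ∈ T) :
    (Finset.eraseNone T).card + 1 = T.card := by
  conv_rhs => rw [← insert_none_eraseNone (T := T) hn]
  rw [Finset.card_insert_of_notMem (by simp), Finset.card_image_of_injective _ (Option.some_injective _)]

/-- The classification of the subset determinants. -/
lemma det_gram_classify [Nonempty V] (v₀ : V) (T : Finset (Option (Sym2 V)))
    (hT : T ∈ (baseSet G).powersetCard (Fintype.card V)) :
    (gram (wfun v₀) T).det
      = if none ∈ T ∧ (SimpleGraph.fromEdgeSet (↑(Finset.eraseNone T) : Set (Sym2 V))).Connected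
        then 1 else 0 := by
  rw [Finset.mem_powersetCard] at hT
  have hsub := eraseNone_subset_edgeFinset G hT.1
  have hd : ∀ e ∈ Finset.eraseNone T, ¬ (e : Sym2 V).IsDiag := by
    intro e he
    exact G.not_isDiag_of_mem_edgeSet (SimpleGraph.mem_edgeFinset.mp (hsub he))
  by_cases hn : none ∈ T
  · have hrepr := insert_none_eraseNone (T := T) hn
    have hcard : (Finset.eraseNone T).card + 1 = Fintype.card V := by
      rw [eraseNone_card hn, hT.2]
    by_cases hc : (SimpleGraph.fromEdgeSet (↑(Finset.eraseNone T) : Set (Sym2 V))).Connected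
    · rw [if_pos ⟨hn, hc⟩, ← hrepr]
      exact det_gram_connected v₀ _ hd hcard hc
    · rw [if_neg (by tauto), ← hrepr]
      exact det_gram_not_connected v₀ _ hd hc
  · rw [if_neg (by tauto)]
    have hrepr : (Finset.eraseNone T).image some = T := by
      ext o
      cases o with
      | none => simp [hn]
      | some e => simp [Finset.mem_eraseNone]
    rw [← hrepr]
    exact det_gram_no_none v₀ _ hd

/-- the collection of subsets corresponding to spanning trees -/
noncomputable def goodFinset : Finset (Finset (Option (Sym2 V))) :=
  ((baseSet G).powersetCard (Fintype.card V)).filter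
    (fun T => none ∈ T ∧
      (SimpleGraph.fromEdgeSet (↑(Finset.eraseNone T) : Set (Sym2 V))).Connected)

/-- a spanning subgraph with given edge set -/
def subOfFinset (T' : Finset (Sym2 V)) (hT' : ↑T' ⊆ G.edgeSet) : G.Subgraph where
  verts := Set.univ
  Adj a b := s(a, b) ∈ T' ∧ a ≠ b
  adj_sub := by
    intro a b h
    obtain ⟨h1, -⟩ := h
    exact G.mem_edgeSet.mp (hT' (Finset.mem_coe.mpr h1))
  edge_vert _ := Set.mem_univ _
  symm := by
    constructor
    intro a b h
    obtain ⟨h1, h2⟩ := h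
    exact ⟨by rwa [Sym2.eq_swap], h2.symm⟩

lemma spanningCoe_subOfFinset (T' : Finset (Sym2 V)) (hT' : ↑T' ⊆ G.edgeSet) :
    (subOfFinset G T' hT').spanningCoe = SimpleGraph.fromEdgeSet (↑T' : Set (Sym2 V)) := by
  ext a b
  rw [SimpleGraph.Subgraph.spanningCoe_adj, SimpleGraph.fromEdgeSet_adj]
  rfl

/-- The number of spanning trees equals the number of good subsets. -/
lemma count_spanning_trees (hconn : G.Connected) :
    Nat.card {H : G.Subgraph // H.IsSpanning ∧ H.spanningCoe.IsTree} = (goodFinset G).card := by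
  rw [← Nat.card_eq_finsetCard]
  apply Nat.card_congr
  refine Equiv.ofBijective ?_ ⟨?_, ?_⟩
  · -- the map: subgraph to finset
    refine fun H => ⟨insert none ((H : G.Subgraph).spanningCoe.edgeFinset.image some), ?_⟩
    obtain ⟨H, hsp, htree⟩ := H
    rw [goodFinset, Finset.mem_filter]
    have hEs : Finset.eraseNone (insert none (H.spanningCoe.edgeFinset.image some))
        = H.spanningCoe.edgeFinset := by
      ext e
      simp [Finset.mem_eraseNone]
    constructor
    · rw [Finset.mem_powersetCard]
      constructor
      · intro o ho
        rw [Finset.mem_insert] at ho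
        rw [baseSet, Finset.mem_insert]
        rcases ho with rfl | ho
        · left; rfl
        · right
          rw [Finset.mem_image] at ho ⊢
          obtain ⟨e, he, rfl⟩ := ho
          refine ⟨e, ?_, rfl⟩
          rw [SimpleGraph.mem_edgeFinset] at he ⊢
          revert he
          generalize e = f
          intro he
          induction f using Sym2.ind with
          | _ a b =>
            rw [SimpleGraph.mem_edgeSet] at he ⊢
            rw [SimpleGraph.Subgraph.spanningCoe_adj] at he
            exact H.adj_sub he
      · rw [Finset.card_insert_of_notMem (by simp),
          Finset.card_image_of_injective _ (Option.some_injective _)]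
        exact htree.card_edgeFinset
    · refine ⟨Finset.mem_insert_self _ _, ?_⟩
      rw [hEs, SimpleGraph.coe_edgeFinset, SimpleGraph.fromEdgeSet_edgeSet]
      exact htree.isConnected
  · -- injectivity
    rintro ⟨H1, hsp1, ht1⟩ ⟨H2, hsp2, ht2⟩ h
    simp only [Subtype.mk.injEq] at h ⊢
    have hE : H1.spanningCoe.edgeFinset = H2.spanningCoe.edgeFinset := by
      have h1 := congrArg Finset.eraseNone h
      have hEs : ∀ (K : SimpleGraph V) [Fintype K.edgeSet],
          Finset.eraseNone (insert none (K.edgeFinset.image some)) = K.edgeFinset := by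
        intro K hK
        ext e
        simp [Finset.mem_eraseNone]
      rwa [hEs, hEs] at h1
    apply SimpleGraph.Subgraph.ext
    · rw [Set.eq_univ_of_forall hsp1, Set.eq_univ_of_forall hsp2]
    · ext a b
      have : H1.spanningCoe.Adj a b ↔ H2.spanningCoe.Adj a b := by
        rw [← SimpleGraph.mem_edgeSet, ← SimpleGraph.mem_edgeSet,
          ← SimpleGraph.mem_edgeFinset, ← SimpleGraph.mem_edgeFinset, hE]
      simpa [SimpleGraph.Subgraph.spanningCoe_adj] using this
  · -- surjectivity
    rintro ⟨T, hT⟩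
    rw [goodFinset, Finset.mem_filter] at hT
    obtain ⟨hTp, hn, hc⟩ := hT
    rw [Finset.mem_powersetCard] at hTp
    set T' := Finset.eraseNone T with hT'
    have hsub : ↑T' ⊆ G.edgeSet := by
      intro e he
      exact SimpleGraph.mem_edgeFinset.mp (eraseNone_subset_edgeFinset G hTp.1 he)
    have hcard : T'.card + 1 = Fintype.card V := by
      rw [hT', eraseNone_card hn, hTp.2]
    have hspan : (subOfFinset G T' hsub).spanningCoe = SimpleGraph.fromEdgeSet (↑T' : Set (Sym2 V)) :=
      spanningCoe_subOfFinset G T' hsub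
    have hnd : ∀ e ∈ T', ¬ (e : Sym2 V).IsDiag :=
      fun e he => G.not_isDiag_of_mem_edgeSet (hsub he)
    have hedge : (SimpleGraph.fromEdgeSet (↑T' : Set (Sym2 V))).edgeSet = ↑T' := by
      rw [SimpleGraph.edgeSet_fromEdgeSet]
      ext e
      simp only [Set.mem_diff, Set.mem_setOf_eq, Finset.mem_coe]
      exact ⟨fun h => h.1, fun h => ⟨h, hnd e h⟩⟩
    have hef : (subOfFinset G T' hsub).spanningCoe.edgeFinset = T' := by
      apply Finset.coe_injective
      rw [SimpleGraph.coe_edgeFinset, hspan, hedge]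
    have htree : (subOfFinset G T' hsub).spanningCoe.IsTree := by
      rw [hspan]
      apply isTree_of_connected_of_card hc
      have hef2 : (SimpleGraph.fromEdgeSet (↑T' : Set (Sym2 V))).edgeFinset = T' := by
        apply Finset.coe_injective
        rw [SimpleGraph.coe_edgeFinset, hedge]
      rw [hef2]
      exact hcard
    refine ⟨⟨subOfFinset G T' hsub, fun v => Set.mem_univ v, htree⟩, ?_⟩
    apply Subtype.ext
    simp only
    rw [hef]
    exact insert_none_eraseNone hn

end Classify
section Lap
variable (G : SimpleGraph V) [DecidableRel G.Adj]

lemma det_lap [Nonempty V] : (G.lapMatrix ℝ).det = 0 := by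
  rw [← Matrix.exists_mulVec_eq_zero_iff]
  refine ⟨fun _ => 1, ?_, G.lapMatrix_mulVec_const_eq_zero⟩
  intro h
  have := congrFun h (Classical.arbitrary V)
  simp at this

lemma adjugate_lap_const (hconn : G.Connected) (i j i' j' : V) :
    (G.lapMatrix ℝ).adjugate i j = (G.lapMatrix ℝ).adjugate i' j' := by
  have : Nonempty V := hconn.nonempty
  set L := G.lapMatrix ℝ with hL
  have hdet : L.det = 0 := det_lap G
  have h1 : L * L.adjugate = 0 := by rw [Matrix.mul_adjugate, hdet, zero_smul]
  have h2 : L.adjugate * L = 0 := by rw [Matrix.adjugate_mul, hdet, zero_smul]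
  have hsym : ∀ a b : V, L a b = L b a := by
    intro a b
    have := congrFun (congrFun (G.isSymm_lapMatrix (R := ℝ)) b) a
    rw [Matrix.transpose_apply] at this
    exact this
  -- columns of the adjugate are constant
  have hcol : ∀ (b : V) (k k' : V), L.adjugate k b = L.adjugate k' b := by
    intro b k k'
    have hker : Matrix.toLin' L (fun k => L.adjugate k b) = 0 := by
      rw [Matrix.toLin'_apply]
      ext a
      have := congrFun (congrFun h1 a) b
      rw [Matrix.mul_apply] at this
      simpa [Matrix.mulVec, dotProduct] using this
    exact G.lapMatrix_mulVec_eq_zero_iff_forall_reachable.mp (by rwa [Matrix.toLin'_apply] at hker) k k'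
      (hconn.preconnected k k')
  -- rows of the adjugate are constant
  have hrow : ∀ (a : V) (k k' : V), L.adjugate a k = L.adjugate a k' := by
    intro a k k'
    have hker : Matrix.toLin' L (fun k => L.adjugate a k) = 0 := by
      rw [Matrix.toLin'_apply]
      ext b
      have h := congrFun (congrFun h2 a) b
      rw [Matrix.mul_apply] at h
      rw [show (0 : Matrix V V ℝ) a b = 0 from rfl] at h
      have h' : ∑ k, L b k * L.adjugate a k = 0 := by
        rw [← h]
        refine Finset.sum_congr rfl fun k _ => ?_
        rw [hsym b k]
        ring
      simpa [Matrix.mulVec, dotProduct] using h'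
    exact G.lapMatrix_mulVec_eq_zero_iff_forall_reachable.mp (by rwa [Matrix.toLin'_apply] at hker) k k'
      (hconn.preconnected k k')
  calc L.adjugate i j = L.adjugate i' j := hcol j i i'
    _ = L.adjugate i' j' := hrow i' j j'

lemma adjugate_lap_diag [Nonempty V] (v₀ : V) :
    (G.lapMatrix ℝ).adjugate v₀ v₀ = ((goodFinset G).card : ℝ) := by
  set L := G.lapMatrix ℝ with hL
  -- step 1 : gram of the base set is L plus a rank one correction
  have hgram : gram (wfun v₀) (baseSet G)
      = L + vecMulVec (Pi.single v₀ 1) (Pi.single v₀ 1) := by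
    ext i j
    rw [baseSet, gram_insert_none_apply, Matrix.add_apply, vecMulVec_apply]
    rw [sum_xe_eq_lap]
    ring
  -- step 2 : the determinant of the correction is the adjugate entry
  have hupd : L + vecMulVec (Pi.single v₀ 1) (Pi.single v₀ 1)
      = L.updateCol v₀ (fun i => (fun k => L k v₀) i + (Pi.single v₀ 1 : V → ℝ) i) := by
    ext i j
    rw [Matrix.updateCol_apply, Matrix.add_apply, vecMulVec_apply]
    by_cases h : j = v₀
    · subst h
      simp [Pi.single_apply]
    · simp [Pi.single_apply, h]
  have hdet2 : (L + vecMulVec (Pi.single v₀ 1) (Pi.single v₀ 1)).det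
      = L.adjugate v₀ v₀ := by
    rw [hupd]
    have := Matrix.det_updateCol_add L v₀ (fun k => L k v₀) (Pi.single v₀ 1)
    rw [show (fun i => (fun k => L k v₀) i + (Pi.single v₀ 1 : V → ℝ) i)
        = (fun k => L k v₀) + (Pi.single v₀ 1 : V → ℝ) from rfl, this]
    rw [Matrix.updateCol_eq_self, det_lap G, zero_add]
    rw [← Matrix.cramer_apply, Matrix.cramer_eq_adjugate_mulVec, Matrix.mulVec_single]
    simp
  -- step 3 : the expansion over subsets
  have hexp := gram_det_sum_subsets (wfun v₀) (baseSet G)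
  rw [hgram] at hexp
  rw [← hdet2, hexp]
  have : ∀ T ∈ (baseSet G).powersetCard (Fintype.card V),
      (gram (wfun v₀) T).det
        = if none ∈ T ∧
            (SimpleGraph.fromEdgeSet (↑(Finset.eraseNone T) : Set (Sym2 V))).Connected
          then (1:ℝ) else 0 := fun T hT => det_gram_classify G v₀ T hT
  rw [Finset.sum_congr rfl this, Finset.sum_boole]
  rw [goodFinset]

end Lap
section Analysis
variable (G : SimpleGraph V) [DecidableRel G.Adj]

lemma Mu_entry (u : ℝ) (i j : V) :
    ((1 : Matrix V V ℝ) - u • G.adjMatrix ℝ + (u ^ 2) • (G.degMatrix ℝ - 1)) i j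
      = (if i = j then (1:ℝ) else 0) - u * (if G.Adj i j then 1 else 0)
        + u^2 * ((if i = j then (G.degree i : ℝ) else 0) - (if i = j then 1 else 0)) := by
  simp [Matrix.sub_apply, Matrix.add_apply, Matrix.smul_apply, Matrix.one_apply,
    SimpleGraph.adjMatrix_apply, SimpleGraph.degMatrix, Matrix.diagonal_apply, smul_eq_mul]

lemma Mu_rowsum (u : ℝ) (i : V) :
    ∑ j, ((1 : Matrix V V ℝ) - u • G.adjMatrix ℝ + (u ^ 2) • (G.degMatrix ℝ - 1)) i j
      = (1 - u) * (1 + u - u * (G.degree i : ℝ)) := by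
  rw [Finset.sum_congr rfl (fun j _ => Mu_entry G u i j)]
  rw [Finset.sum_add_distrib, Finset.sum_sub_distrib, ← Finset.mul_sum, ← Finset.mul_sum,
    Finset.sum_sub_distrib]
  have h1 : ∑ j : V, (if i = j then (1:ℝ) else 0) = 1 := by simp
  have h2 : ∑ j : V, (if G.Adj i j then (1:ℝ) else 0) = (G.degree i : ℝ) :=
    (G.degree_eq_sum_if_adj i).symm
  have h3 : ∑ j : V, (if i = j then (G.degree i : ℝ) else 0) = (G.degree i : ℝ) := by simp
  rw [h1, h2, h3]
  ring

noncomputable def gfun (v₀ : V) : ℝ → ℝ := fun u =>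
  (((1 : Matrix V V ℝ) - u • G.adjMatrix ℝ + (u ^ 2) • (G.degMatrix ℝ - 1)).updateCol v₀
    (fun v => 1 + u - u * (G.degree v : ℝ))).det

lemma Mu_one : (1 : Matrix V V ℝ) - (1:ℝ) • G.adjMatrix ℝ + ((1:ℝ) ^ 2) • (G.degMatrix ℝ - 1)
    = G.lapMatrix ℝ := by
  rw [SimpleGraph.lapMatrix]
  simp only [one_smul, one_pow]
  abel

lemma ihara_det_eq (v₀ : V) (u : ℝ) :
    ((1 : Matrix V V ℝ) - u • G.adjMatrix ℝ + (u ^ 2) • (G.degMatrix ℝ - 1)).det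
      = (1 - u) * gfun G v₀ u := by
  set M := (1 : Matrix V V ℝ) - u • G.adjMatrix ℝ + (u ^ 2) • (G.degMatrix ℝ - 1) with hM
  have hsum := Matrix.det_updateCol_sum M v₀ (fun _ => (1:ℝ))
  simp only [one_smul, smul_eq_mul, one_mul] at hsum
  have hcol : (fun k => ∑ i, M k i)
      = (1 - u) • (fun v => 1 + u - u * (G.degree v : ℝ)) := by
    funext k
    rw [hM, Mu_rowsum]
    simp [smul_eq_mul]
  rw [← hsum, hcol, Matrix.det_updateCol_smul]
  rfl

lemma gfun_one (v₀ : V) :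
    gfun G v₀ 1 = ((G.lapMatrix ℝ).updateCol v₀ (fun v => 2 - (G.degree v : ℝ))).det := by
  rw [gfun, Mu_one]
  congr 1
  funext v
  ring

lemma gfun_diff (v₀ : V) : DifferentiableAt ℝ (gfun G v₀) 1 := by
  have hrep : gfun G v₀ = fun u => ∑ σ : Equiv.Perm V,
      ((Equiv.Perm.sign σ : ℤ) : ℝ) * ∏ i : V,
        (((1 : Matrix V V ℝ) - u • G.adjMatrix ℝ + (u ^ 2) • (G.degMatrix ℝ - 1)).updateCol v₀
          (fun v => 1 + u - u * (G.degree v : ℝ))) (σ i) i := by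
    funext u
    exact Matrix.det_apply' _
  rw [hrep]
  apply DifferentiableAt.fun_sum
  intro σ _
  apply DifferentiableAt.const_mul
  apply DifferentiableAt.fun_finsetProd
  intro i _
  simp only [Matrix.updateCol_apply, Mu_entry]
  by_cases h : i = v₀
  · simp only [h, if_true]
    fun_prop
  · simp only [h, if_false]
    fun_prop

end Analysis
end IharaAux


/-- for a connected graph with `n` vertices and `m` edges,
`f_G(1) = 0` and `f_G'(1) = 2(m − n) κ(G)`. -/
theorem iharaPoly_at_one {V : Type*} [Fintype V] [DecidableEq V] (G : SimpleGraph V)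
    [DecidableRel G.Adj] (hconn : G.Connected) :
    iharaPoly G 1 = 0 ∧
      deriv (iharaPoly G) 1 =
        2 * ((G.edgeFinset.card : ℝ) - (Fintype.card V : ℝ)) * (numSpanningTrees G : ℝ) := by
  classical
  haveI hne : Nonempty V := hconn.nonempty
  set v₀ := Classical.arbitrary V with hv₀
  have hdeg : degMatrix G = G.degMatrix ℝ := rfl
  have hih : iharaPoly G = fun u => (1 - u) * IharaAux.gfun G v₀ u := by
    funext u
    show ((1 : Matrix V V ℝ) - u • G.adjMatrix ℝ + (u ^ 2) • (degMatrix G - 1)).det = _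
    rw [hdeg]
    exact IharaAux.ihara_det_eq G v₀ u
  have hκ : ∀ i j : V, (G.lapMatrix ℝ).adjugate i j = (numSpanningTrees G : ℝ) := by
    intro i j
    rw [IharaAux.adjugate_lap_const G hconn i j v₀ v₀, IharaAux.adjugate_lap_diag G v₀]
    norm_cast
    exact (IharaAux.count_spanning_trees G hconn).symm
  have hg1 : IharaAux.gfun G v₀ 1
      = (numSpanningTrees G : ℝ) * (2 * (Fintype.card V : ℝ) - 2 * (G.edgeFinset.card : ℝ)) := by
    rw [IharaAux.gfun_one, ← Matrix.cramer_apply, Matrix.cramer_eq_adjugate_mulVec]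
    rw [Matrix.mulVec, dotProduct]
    have hterm : ∀ w : V, (G.lapMatrix ℝ).adjugate v₀ w * (2 - (G.degree w : ℝ))
        = (numSpanningTrees G : ℝ) * (2 - (G.degree w : ℝ)) := fun w => by rw [hκ]
    rw [Finset.sum_congr rfl fun w _ => hterm w, ← Finset.mul_sum]
    congr 1
    rw [Finset.sum_sub_distrib]
    have hdegsum : ∑ w : V, (G.degree w : ℝ) = 2 * (G.edgeFinset.card : ℝ) := by
      rw [← Nat.cast_sum]
      rw [G.sum_degrees_eq_twice_card_edges]
      push_cast
      ring
    rw [hdegsum]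
    simp [Finset.card_univ]
    ring
  constructor
  · rw [hih]
    simp
  · rw [hih]
    have hc : DifferentiableAt ℝ (fun u : ℝ => 1 - u) 1 :=
      (differentiableAt_const _).sub differentiableAt_id
    rw [deriv_fun_mul hc (IharaAux.gfun_diff G v₀)]
    have hd1 : deriv (fun u : ℝ => 1 - u) 1 = -1 := by
      rw [deriv_const_sub]
      simp
    rw [hd1, hg1]
    ring
end

section
/- Let G be a simple connected k-regular graph with k ≥ 3 and let λ be a real eigenvalue of the adjacency matrix with |λ| ≤ 2√(k−1) and λ ≠ ±k. Then the corresponding poles u = (λ² − 2k + 4 ± iλ√(4k − 4 − λ²)) / (2(λ² + (k−2)²)) of the modified zeta function, written u = p + qi, satisfy (p + 1/(k² − 2k))² + q² = ((k−1)/(k² − 2k))². -/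
open Matrix

/-- for a simple connected `k`-regular graph (`k ≥ 3`) and a nontrivial real
adjacency eigenvalue `λ` with `|λ| ≤ 2√(k−1)`, the corresponding poles
`u = p + qi = (λ² − 2k + 4 ± iλ√(4k − 4 − λ²)) / (2(λ² + (k−2)²))` of the modified zeta
function lie on the circle `(p + 1/(k² − 2k))² + q² = ((k−1)/(k² − 2k))²`. -/
theorem poles_on_circle {V : Type*} [Fintype V] [DecidableEq V] (G : SimpleGraph V)
    [DecidableRel G.Adj] (hconn : G.Connected) (k : ℕ) (hk : 3 ≤ k)
    (hreg : G.IsRegularOfDegree k) (lam : ℝ) (hlam : lam ∈ spectrum ℝ (G.adjMatrix ℝ))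
    (hram : |lam| ≤ 2 * Real.sqrt (k - 1)) (hk1 : lam ≠ k) (hk2 : lam ≠ -(k : ℝ))
    (s : ℝ) (hs : s = 1 ∨ s = -1) :
    ((lam ^ 2 - 2 * k + 4) / (2 * (lam ^ 2 + ((k : ℝ) - 2) ^ 2)) +
          1 / ((k : ℝ) ^ 2 - 2 * k)) ^ 2 +
        (s * lam * Real.sqrt (4 * k - 4 - lam ^ 2) /
          (2 * (lam ^ 2 + ((k : ℝ) - 2) ^ 2))) ^ 2 =
      (((k : ℝ) - 1) / ((k : ℝ) ^ 2 - 2 * k)) ^ 2 := by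
  have hk3 : (3 : ℝ) ≤ (k : ℝ) := by exact_mod_cast hk
  have hk2' : ((k : ℝ) - 2) ^ 2 > 0 := by nlinarith
  have hD : lam ^ 2 + ((k : ℝ) - 2) ^ 2 ≠ 0 := by positivity
  have hkk : (k : ℝ) ^ 2 - 2 * k ≠ 0 := by nlinarith
  have hs2 : s ^ 2 = 1 := by rcases hs with h | h <;> simp [h]
  have hnn : (0 : ℝ) ≤ 4 * (k : ℝ) - 4 - lam ^ 2 := by
    have h1 : lam ^ 2 ≤ (2 * Real.sqrt ((k : ℝ) - 1)) ^ 2 := by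
      rw [← sq_abs]
      exact pow_le_pow_left₀ (abs_nonneg _) hram 2
    have h2 : (Real.sqrt ((k : ℝ) - 1)) ^ 2 = (k : ℝ) - 1 :=
      Real.sq_sqrt (by linarith)
    nlinarith
  have hsq : (Real.sqrt (4 * (k : ℝ) - 4 - lam ^ 2)) ^ 2 = 4 * (k : ℝ) - 4 - lam ^ 2 :=
    Real.sq_sqrt hnn
  have key : (s * lam * Real.sqrt (4 * (k : ℝ) - 4 - lam ^ 2)) ^ 2
      = lam ^ 2 * (4 * (k : ℝ) - 4 - lam ^ 2) := by
    rw [mul_pow, mul_pow, hsq, hs2]; ring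
  rw [div_pow, key]
  field_simp [show (k : ℝ) - 2 ≠ 0 by linarith, show (k : ℝ) ≠ 0 by linarith]
  ring
end

section
/- Let G be a finite connected non-bipartite graph with minimum degree at least 3. Then the matrix (U²)⁺ (the 0-1 matrix with (e,f)-entry 1 iff (f,e) is a 2-step-arc or a 2-step-identity) is irreducible: for any two oriented edges e, f of G there exists a positive integer r with (((U²)⁺)^r)_{e,f} > 0. -/
open Matrix

open scoped Classical in
/-- The `0`-`1` matrix `(U²)⁺` on oriented edges, with `(e,f)`-entry `1` iff `(f,e)` is a
2-step-arc (there is an oriented edge `g` with `g ≠ f⁻¹`, `g ≠ e⁻¹`, `o(g) = t(f)` and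
`t(g) = o(e)`) or a 2-step-identity (`f = e`). -/
noncomputable def twoStepMatrix {V : Type*} (G : SimpleGraph V) :
    Matrix G.Dart G.Dart ℝ := fun e f =>
  if (∃ g : G.Dart, g ≠ f.symm ∧ g ≠ e.symm ∧ g.toProd.1 = f.toProd.2 ∧
        g.toProd.2 = e.toProd.1) ∨ f = e then 1 else 0

namespace TwoStepAux

variable {V : Type*} {G : SimpleGraph V}

/-- A single non-backtracking step between darts. -/
def Step (a b : G.Dart) : Prop := b.toProd.1 = a.toProd.2 ∧ b ≠ a.symm

/-- Non-backtracking walks of a given length between darts. -/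
def ReachN : ℕ → G.Dart → G.Dart → Prop
  | 0, a, b => a = b
  | n + 1, a, b => ∃ c, Step a c ∧ ReachN n c b

/-- Reachability by a non-backtracking walk. -/
def Reach (a b : G.Dart) : Prop := ∃ n, ReachN n a b

lemma symm_ne {x y : G.Dart} (h : x ≠ y) : x.symm ≠ y.symm := fun hc =>
  h (by simpa using congrArg SimpleGraph.Dart.symm hc)

lemma step_of {a b : G.Dart} (h1 : b.toProd.1 = a.toProd.2) (h2 : b ≠ a.symm) : Step a b :=
  ⟨h1, h2⟩

lemma step_symm {a b : G.Dart} (h : Step a b) : Step b.symm a.symm := by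
  refine ⟨?_, ?_⟩
  · simp [h.1]
  · simp only [SimpleGraph.Dart.symm_symm]
    intro hc
    exact h.2 (by simp [hc])

lemma reachN_trans {m n : ℕ} {a b c : G.Dart} (h1 : ReachN m a b) (h2 : ReachN n b c) :
    ReachN (m + n) a c := by
  induction m generalizing a with
  | zero => rw [Nat.zero_add]; cases h1; exact h2
  | succ m ih =>
    obtain ⟨d, hs, h⟩ := h1
    have : m + 1 + n = (m + n) + 1 := by omega
    rw [this]
    exact ⟨d, hs, ih h⟩

lemma reachN_snoc {n : ℕ} {a b c : G.Dart} (h1 : ReachN n a b) (h2 : Step b c) :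
    ReachN (n + 1) a c := by
  induction n generalizing a with
  | zero => cases h1; exact ⟨c, h2, rfl⟩
  | succ n ih =>
    obtain ⟨d, hs, h⟩ := h1
    exact ⟨d, hs, ih h⟩

lemma reachN_symm {n : ℕ} {a b : G.Dart} (h : ReachN n a b) : ReachN n b.symm a.symm := by
  induction n generalizing a with
  | zero => cases h; rfl
  | succ n ih =>
    obtain ⟨c, hs, h⟩ := h
    exact reachN_snoc (ih h) (step_symm hs)

lemma reach_refl {a : G.Dart} : Reach a a := ⟨0, rfl⟩

lemma reach_trans {a b c : G.Dart} (h1 : Reach a b) (h2 : Reach b c) : Reach a c := by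
  obtain ⟨m, h1⟩ := h1; obtain ⟨n, h2⟩ := h2; exact ⟨m + n, reachN_trans h1 h2⟩

lemma reach_tail {a b c : G.Dart} (h1 : Reach a b) (h2 : Step b c) : Reach a c := by
  obtain ⟨n, h1⟩ := h1; exact ⟨n + 1, reachN_snoc h1 h2⟩

section Main

variable [Fintype V] [DecidableEq V] [DecidableRel G.Adj]

/-- Core lemma: with minimum degree at least 3, every dart non-backtracking-reaches
its own reversal. -/
lemma reach_symm_self (hdeg : 3 ≤ G.minDegree) (a : G.Dart) : Reach a a.symm := by
  classical
  by_contra hns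
  have hpair : ∀ x : G.Dart, Reach a x → Reach a x.symm → False := by
    intro x h1 h2
    obtain ⟨n, h2⟩ := h2
    have h3 : ReachN n x a.symm := by
      have := reachN_symm h2
      rwa [SimpleGraph.Dart.symm_symm] at this
    exact hns (reach_trans h1 ⟨n, h3⟩)
  have huniq : ∀ x y : G.Dart, Reach a x → Reach a y → x.toProd.2 = y.toProd.2 → x = y := by
    intro x y hx hy hxy
    by_contra hne
    have hstep : Step x y.symm := step_of (by simp [hxy]) (symm_ne (Ne.symm hne))
    exact hpair y hy (reach_tail hx hstep)
  set W : Finset V := Finset.univ.filter (fun v => ∃ x : G.Dart, Reach a x ∧ x.toProd.2 = v)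
    with hWdef
  have hmemW : ∀ {x : G.Dart}, Reach a x → x.toProd.2 ∈ W := by
    intro x hx
    simp only [hWdef, Finset.mem_filter, Finset.mem_univ, true_and]
    exact ⟨x, hx, rfl⟩
  have hW' : ∀ v, v ∈ W → ∃ x : G.Dart, Reach a x ∧ x.toProd.2 = v := by
    intro v hv
    simpa only [hWdef, Finset.mem_filter, Finset.mem_univ, true_and] using hv
  have hW2 : ∀ v : V, ∃ x : G.Dart, v ∈ W → Reach a x ∧ x.toProd.2 = v := by
    intro v
    by_cases hv : v ∈ W
    · obtain ⟨x, hx⟩ := hW' v hv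
      exact ⟨x, fun _ => hx⟩
    · exact ⟨a, fun h => absurd h hv⟩
  choose ent hent using hW2
  have hent1 : ∀ v, v ∈ W → Reach a (ent v) := fun v hv => (hent v hv).1
  have hent2 : ∀ v, v ∈ W → (ent v).toProd.2 = v := fun v hv => (hent v hv).2
  set p : V → V := fun v => (ent v).toProd.1 with hpdef
  have hkey : ∀ v, v ∈ W → ∀ u, G.Adj v u → u ≠ p v → u ∈ W ∧ p u = v := by
    intro v hv u hadj hu
    have hd : Step (ent v) ⟨(v, u), hadj⟩ := by
      refine step_of (hent2 v hv).symm ?_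
      intro hc
      apply hu
      have := congrArg (fun d : G.Dart => d.toProd.2) hc
      simpa [hpdef] using this
    have hreach : Reach a ⟨(v, u), hadj⟩ := reach_tail (hent1 v hv) hd
    have huW : u ∈ W := hmemW hreach
    refine ⟨huW, ?_⟩
    have : ent u = ⟨(v, u), hadj⟩ := huniq _ _ (hent1 u huW) hreach (hent2 u huW)
    simp [hpdef, this]
  have hfib : ∀ v ∈ W, 2 ≤ (W.filter (fun u => p u = v)).card := by
    intro v hv
    have hsub : (G.neighborFinset v).erase (p v) ⊆ W.filter (fun u => p u = v) := by
      intro u hu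
      rw [Finset.mem_erase, SimpleGraph.mem_neighborFinset] at hu
      obtain ⟨h1, h2⟩ := hu
      obtain ⟨hW, hp⟩ := hkey v hv u h2 h1
      simp [Finset.mem_filter, hW, hp]
    have hdeg' : 3 ≤ (G.neighborFinset v).card := by
      have := G.minDegree_le_degree v
      rw [SimpleGraph.degree] at this
      omega
    have herase := Finset.pred_card_le_card_erase (a := p v) (s := G.neighborFinset v)
    have := Finset.card_le_card hsub
    omega
  have hcount : W.card = ∑ v ∈ Finset.univ, (W.filter (fun u => p u = v)).card :=
    Finset.card_eq_sum_card_fiberwise fun x _ => Finset.mem_univ (p x)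
  have h2W : 2 * W.card ≤ W.card := by
    calc 2 * W.card = ∑ _v ∈ W, 2 := by rw [Finset.sum_const, smul_eq_mul, mul_comm]
    _ ≤ ∑ v ∈ W, (W.filter (fun u => p u = v)).card := Finset.sum_le_sum hfib
    _ ≤ ∑ v ∈ Finset.univ, (W.filter (fun u => p u = v)).card :=
        Finset.sum_le_sum_of_subset (Finset.subset_univ W)
    _ = W.card := hcount.symm
  have hne : 0 < W.card := Finset.card_pos.mpr ⟨a.toProd.2, hmemW reach_refl⟩
  omega

/-- Full strong connectivity of the non-backtracking step relation. -/
lemma reach_all (hdeg : 3 ≤ G.minDegree) (hconn : G.Connected) (a b : G.Dart) : Reach a b := by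
  have main : ∀ {u v : V} (_ : G.Walk u v) (c : G.Dart), Reach a c → c.toProd.2 = u →
      ∃ c', Reach a c' ∧ c'.toProd.2 = v := by
    intro u v w
    induction w with
    | nil => exact fun c h1 h2 => ⟨c, h1, h2⟩
    | @cons u u' v hadj w ih =>
      intro c h1 h2
      by_cases hcase : (⟨(u, u'), hadj⟩ : G.Dart) = c.symm
      · have : Reach a (⟨(u, u'), hadj⟩ : G.Dart) := by
          rw [hcase]; exact reach_trans h1 (reach_symm_self hdeg c)
        exact ih _ this rfl
      · exact ih _ (reach_tail h1 (step_of h2.symm hcase)) rfl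
  obtain ⟨w⟩ := hconn.preconnected a.toProd.2 b.toProd.1
  obtain ⟨c, hc, hc2⟩ := main w a reach_refl rfl
  by_cases hcase : b = c.symm
  · rw [hcase]; exact reach_trans hc (reach_symm_self hdeg c)
  · exact reach_tail hc (step_of hc2.symm hcase)

lemma entry_nonneg (e f : G.Dart) : 0 ≤ twoStepMatrix G e f := by
  rw [twoStepMatrix]
  split_ifs <;> norm_num

lemma pow_entry_nonneg (r : ℕ) (e f : G.Dart) : 0 ≤ ((twoStepMatrix G) ^ r) e f := by
  induction r generalizing e f with
  | zero =>
    rw [pow_zero]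
    by_cases h : e = f
    · subst h; rw [Matrix.one_apply_eq]; norm_num
    · rw [Matrix.one_apply_ne h]
  | succ r ih =>
    rw [pow_succ, Matrix.mul_apply]
    exact Finset.sum_nonneg fun x _ => mul_nonneg (ih e x) (entry_nonneg x f)

lemma pow_pos_of_reach {r : ℕ} {e f : G.Dart} (h : ReachN (2 * r) f e) :
    0 < ((twoStepMatrix G) ^ r) e f := by
  induction r generalizing f with
  | zero =>
    have : f = e := h
    subst this
    rw [pow_zero, Matrix.one_apply_eq]; norm_num
  | succ r ih =>
    have h2 : ReachN (2 * r + 1 + 1) f e := by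
      have hn : 2 * (r + 1) = 2 * r + 1 + 1 := by ring
      rwa [hn] at h
    obtain ⟨g, hg, h2⟩ := h2
    obtain ⟨k, hk, h3⟩ := h2
    have hM : twoStepMatrix G k f = 1 := by
      rw [twoStepMatrix, if_pos]
      left
      refine ⟨g, hg.2, ?_, hg.1, hk.1.symm⟩
      intro hc
      exact hk.2 (by simp [hc])
    rw [pow_succ, Matrix.mul_apply]
    refine Finset.sum_pos' (fun x _ => mul_nonneg (pow_entry_nonneg r e x) (entry_nonneg x f)) ?_
    refine ⟨k, Finset.mem_univ k, ?_⟩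
    rw [hM, mul_one]
    exact ih h3

end Main

end TwoStepAux

open TwoStepAux in
/-- for a finite connected non-bipartite graph with minimum degree at least
3, the matrix `(U²)⁺` is irreducible: for any oriented edges `e, f` there is `r ≥ 1` with
`(((U²)⁺)^r)_{e,f} > 0`. -/
theorem twoStepMatrix_irreducible {V : Type*} [Fintype V] [DecidableEq V]
    (G : SimpleGraph V) [DecidableRel G.Adj] (hconn : G.Connected)
    (hnonbip : ¬ G.Colorable 2) (hdeg : 3 ≤ G.minDegree) (e f : G.Dart) :
    ∃ r : ℕ, 0 < r ∧ 0 < ((twoStepMatrix G) ^ r) e f := by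
  classical
  by_cases hef : f = e
  · refine ⟨1, one_pos, ?_⟩
    rw [pow_one]
    have : twoStepMatrix G e f = 1 := by rw [twoStepMatrix, if_pos (Or.inr hef)]
    rw [this]; norm_num
  · have hreach : ∀ x y : G.Dart, Reach x y := fun x y => reach_all hdeg hconn x y
    have hthird : ∀ v w1 w2 : V, ∃ u, G.Adj v u ∧ u ≠ w1 ∧ u ≠ w2 := by
      intro v w1 w2
      have h3 : 3 ≤ (G.neighborFinset v).card := by
        have := G.minDegree_le_degree v
        rw [SimpleGraph.degree] at this
        omega
      have e1 := Finset.pred_card_le_card_erase (a := w1) (s := G.neighborFinset v)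
      have e2 := Finset.pred_card_le_card_erase (a := w2) (s := (G.neighborFinset v).erase w1)
      have hpos : 0 < (((G.neighborFinset v).erase w1).erase w2).card := by omega
      obtain ⟨u, hu⟩ := Finset.card_pos.mp hpos
      rw [Finset.mem_erase, Finset.mem_erase, SimpleGraph.mem_neighborFinset] at hu
      exact ⟨u, hu.2.2, hu.2.1, hu.1⟩
    have key : ∃ n, ReachN n f e ∧ n % 2 = 0 := by
      by_contra hodd
      push_neg at hodd
      have hodd' : ∀ n, ReachN n f e → n % 2 = 1 := by
        intro n hn
        have := hodd n hn
        omega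
      choose len hlen using fun x => hreach f x
      set φ : G.Dart → ℕ := fun x => len x % 2 with hφ
      have hφlt : ∀ x, φ x < 2 := fun x => Nat.mod_lt _ two_pos
      have hcons : ∀ (x : G.Dart) m n, ReachN m f x → ReachN n f x → m % 2 = n % 2 := by
        intro x m n hm hn
        obtain ⟨k, hk⟩ := hreach x e
        have h1 := hodd' (m + k) (reachN_trans hm hk)
        have h2 := hodd' (n + k) (reachN_trans hn hk)
        omega
      have hstepφ : ∀ x y : G.Dart, Step x y → φ y = (φ x + 1) % 2 := by
        intro x y hs
        have h1 : ReachN (len x + 1) f y := reachN_snoc (hlen x) hs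
        have h2 := hcons y (len y) (len x + 1) (hlen y) h1
        simp only [hφ]
        omega
      have hsame : ∀ x y : G.Dart, x.toProd.2 = y.toProd.2 → φ x = φ y := by
        intro x y hxy
        by_cases hne : x = y
        · rw [hne]
        obtain ⟨w, hadj, hw1, hw2⟩ := hthird x.toProd.2 x.toProd.1 y.toProd.1
        set z : G.Dart := ⟨(w, x.toProd.2), hadj.symm⟩ with hz
        have hzx : z ≠ x := fun h => hw1 (congrArg (fun d : G.Dart => d.toProd.1) h)
        have hzy : z ≠ y := fun h => hw2 (congrArg (fun d : G.Dart => d.toProd.1) h)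
        have s1 : Step x y.symm := step_of (by simp [hxy]) (symm_ne (Ne.symm hne))
        have s2 : Step z y.symm := step_of (by simp [hxy, hz]) (symm_ne hzy.symm)
        have s3 : Step y x.symm := step_of (by simp [hxy]) (symm_ne hne)
        have s4 : Step z x.symm := step_of (by simp [hz]) (symm_ne hzx.symm)
        have e1 := hstepφ x y.symm s1
        have e2 := hstepφ z y.symm s2
        have e3 := hstepφ y x.symm s3
        have e4 := hstepφ z x.symm s4
        have l1 := hφlt x
        have l2 := hφlt y
        have l3 := hφlt z
        omega
      have hflip : ∀ x : G.Dart, φ x.symm = (φ x + 1) % 2 := by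
        intro x
        obtain ⟨w, hadj, hw1, _⟩ := hthird x.toProd.2 x.toProd.1 x.toProd.1
        set x' : G.Dart := ⟨(w, x.toProd.2), hadj.symm⟩ with hx'
        have hne : x' ≠ x := fun h => hw1 (congrArg (fun d : G.Dart => d.toProd.1) h)
        have hs : Step x' x.symm := step_of (by simp [hx']) (symm_ne (Ne.symm hne))
        rw [hstepφ x' x.symm hs, hsame x' x rfl]
      have hv3 : ∀ v : V, ∃ u, G.Adj v u := fun v => ⟨(hthird v v v).choose,
        (hthird v v v).choose_spec.1⟩
      choose nb hnb using hv3
      set c : V → Fin 2 := fun v => ⟨φ ⟨(nb v, v), (hnb v).symm⟩, hφlt _⟩ with hc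
      have hproper : ∀ {u v : V}, G.Adj u v → c u ≠ c v := by
        intro u v hadj hcc
        have h1 : φ (⟨(nb v, v), (hnb v).symm⟩ : G.Dart) = φ (⟨(u, v), hadj⟩ : G.Dart) :=
          hsame _ _ rfl
        have h2 : φ (⟨(nb u, u), (hnb u).symm⟩ : G.Dart) =
            φ ((⟨(u, v), hadj⟩ : G.Dart).symm) := hsame _ _ (by simp)
        rw [hflip] at h2
        have h3 := congrArg Fin.val hcc
        simp only [hc] at h3
        have l1 := hφlt (⟨(u, v), hadj⟩ : G.Dart)
        omega
      exact hnonbip ⟨SimpleGraph.Coloring.mk c hproper⟩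
    obtain ⟨n, hn, hpar⟩ := key
    obtain ⟨r, hr⟩ : ∃ r, n = 2 * r := ⟨n / 2, by omega⟩
    subst hr
    have hr0 : r ≠ 0 := by
      rintro rfl
      exact hef hn
    exact ⟨r, Nat.pos_of_ne_zero hr0, pow_pos_of_reach hn⟩
end
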